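/- arXiv:1712.06155 — 3 statements merged into one kernel-verified Lean document; each statement's English description precedes it below -/
import Mathlib

section
/- Let X be a GC_n set with n ≥ 1, n ≠ 3, and let ℓ be an n-node line of X. Suppose there exist n distinct maximal lines of X passing through n distinct nodes of X lying on ℓ (one maximal line through each of the n nodes of ℓ). Then X possesses at least one further maximal line, i.e., X has at least n+1 maximal lines. -/
open MvPolynomial

/-- Points of the plane `ℝ²`. -/
abbrev Pt : Type := Fin 2 → ℝ

/-- Bivariate real polynomials. -/
abbrev BPoly : Type := MvPolynomial (Fin 2) ℝ

/-- `X` is an `n`-poised node set: it has `N = (n+1)(n+2)/2` nodes and every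
interpolation problem with polynomials of total degree at most `n` has a unique solution. -/
def IsPoised (n : ℕ) (X : Set Pt) : Prop :=
  X.ncard = (n + 1) * (n + 2) / 2 ∧
  ∀ c : Pt → ℝ, ∃! p : BPoly, p.totalDegree ≤ n ∧ ∀ A ∈ X, eval A p = c A

/-- `p` is an `n`-fundamental polynomial of the node `A` for the node set `X`. -/
def IsFund (n : ℕ) (X : Set Pt) (A : Pt) (p : BPoly) : Prop :=
  p.totalDegree ≤ n ∧ eval A p = 1 ∧ ∀ B ∈ X, B ≠ A → eval B p = 0

/-- `X` is a `GC_n` set: it is `n`-poised and each node has a fundamental polynomial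
that is a product of `n` polynomials of degree `1`. -/
def IsGC (n : ℕ) (X : Set Pt) : Prop :=
  IsPoised n X ∧
  ∀ A ∈ X, ∃ p : BPoly, IsFund n X A p ∧
    ∃ f : Fin n → BPoly, (∀ i, (f i).totalDegree = 1) ∧ p = ∏ i, f i

/-- A line is the zero set of a polynomial of degree exactly `1`. -/
def IsLine (L : Set Pt) : Prop :=
  ∃ f : BPoly, f.totalDegree = 1 ∧ L = {x : Pt | eval x f = 0}

/-- A `k`-node line of `X`: a line passing through exactly `k` nodes of `X`. -/
def IsNodeLine (k : ℕ) (X : Set Pt) (L : Set Pt) : Prop :=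
  IsLine L ∧ (X ∩ L).ncard = k

/-- A maximal line of an `n`-poised set `X`: an `(n+1)`-node line. -/
def IsMaxLine (n : ℕ) (X : Set Pt) (L : Set Pt) : Prop :=
  IsNodeLine (n + 1) X L

/-- The node `A` uses the line `L`: a degree-1 polynomial whose zero set is `L`
divides the `n`-fundamental polynomial of `A` with respect to `X`. -/
def Uses (n : ℕ) (X : Set Pt) (L : Set Pt) (A : Pt) : Prop :=
  ∃ p f : BPoly, IsFund n X A p ∧ f.totalDegree = 1 ∧ L = {x : Pt | eval x f = 0} ∧ f ∣ p

/-- `X_ℓ`: the set of nodes of `X` that use the line `L`. -/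
def UseSet (n : ℕ) (X : Set Pt) (L : Set Pt) : Set Pt :=
  {A ∈ X | Uses n X L A}


namespace GCAux

lemma e0ne : (Finsupp.single 0 1 : Fin 2 →₀ ℕ) ≠ 0 := by
  intro h; simpa using DFunLike.congr_fun h 0

lemma e1ne : (Finsupp.single 1 1 : Fin 2 →₀ ℕ) ≠ 0 := by
  intro h; simpa using DFunLike.congr_fun h 1

lemma e01ne : (Finsupp.single 0 1 : Fin 2 →₀ ℕ) ≠ Finsupp.single 1 1 := by
  intro h; simpa using DFunLike.congr_fun h 0

lemma fin2_monomial_cases (m : Fin 2 →₀ ℕ) (h : m 0 + m 1 ≤ 1) :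
    m = 0 ∨ m = Finsupp.single 0 1 ∨ m = Finsupp.single 1 1 := by
  have h0 : m 0 = 0 ∧ m 1 = 0 ∨ m 0 = 1 ∧ m 1 = 0 ∨ m 0 = 0 ∧ m 1 = 1 := by omega
  rcases h0 with ⟨h1, h2⟩ | ⟨h1, h2⟩ | ⟨h1, h2⟩
  · left; ext i; fin_cases i <;> simp [h1, h2]
  · right; left; ext i; fin_cases i <;> simp [h1, h2, Finsupp.single_apply]
  · right; right; ext i; fin_cases i <;> simp [h1, h2, Finsupp.single_apply]

lemma monomial_sum_eq (m : Fin 2 →₀ ℕ) : (m.sum fun _ e => e) = m 0 + m 1 := by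
  rw [Finsupp.sum_fintype]
  · exact Fin.sum_univ_two m
  · intro; rfl

lemma eq_linear_of_totalDegree_le_one (p : BPoly) (h : p.totalDegree ≤ 1) :
    p = C (coeff (Finsupp.single 0 1) p) * X 0 + C (coeff (Finsupp.single 1 1) p) * X 1
        + C (coeff 0 p) := by
  apply MvPolynomial.ext
  intro m
  rw [coeff_add, coeff_add, coeff_C, coeff_C_mul, coeff_C_mul, coeff_X', coeff_X']
  by_cases hm : m ∈ p.support
  · have hdeg : m 0 + m 1 ≤ 1 := by
      have := MvPolynomial.le_totalDegree hm
      rw [monomial_sum_eq] at this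
      omega
    rcases fin2_monomial_cases m hdeg with h1 | h1 | h1 <;> subst h1 <;>
      simp [e0ne, e1ne, e01ne, Ne.symm e0ne, Ne.symm e1ne, Ne.symm e01ne]
  · have hc : coeff m p = 0 := by rwa [MvPolynomial.notMem_support_iff] at hm
    rw [hc]
    split_ifs with h1 h2 h3 <;> try subst h1
    all_goals try subst h2
    all_goals try subst h3
    all_goals simp_all

/-- linear polynomial `a·x₀ + b·x₁ + c` -/
noncomputable def linPoly (a b c : ℝ) : BPoly := C a * X 0 + C b * X 1 + C c

lemma eval_linPoly (a b c : ℝ) (x : Pt) : eval x (linPoly a b c) = a * x 0 + b * x 1 + c := by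
  simp [linPoly]

lemma totalDegree_linPoly_le (a b c : ℝ) : (linPoly a b c).totalDegree ≤ 1 := by
  refine le_trans (totalDegree_add _ _) (max_le (le_trans (totalDegree_add _ _) (max_le ?_ ?_)) ?_)
  · exact le_trans (totalDegree_mul _ _) (by simp)
  · exact le_trans (totalDegree_mul _ _) (by simp)
  · simp

lemma coeff_linPoly0 (a b c : ℝ) : coeff (Finsupp.single 0 1) (linPoly a b c) = a := by
  simp [linPoly, coeff_add, coeff_C_mul, coeff_X', e0ne, Ne.symm e0ne, Ne.symm e01ne]

lemma coeff_linPoly1 (a b c : ℝ) : coeff (Finsupp.single 1 1) (linPoly a b c) = b := by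
  simp [linPoly, coeff_add, coeff_C_mul, coeff_X', e1ne, Ne.symm e1ne, e01ne]

lemma totalDegree_linPoly_eq (a b c : ℝ) (h : ¬(a = 0 ∧ b = 0)) :
    (linPoly a b c).totalDegree = 1 := by
  refine le_antisymm (totalDegree_linPoly_le a b c) ?_
  rcases not_and_or.1 h with ha | hb
  · have : (Finsupp.single 0 1 : Fin 2 →₀ ℕ) ∈ (linPoly a b c).support := by
      rw [MvPolynomial.mem_support_iff, coeff_linPoly0]; exact ha
    have := MvPolynomial.le_totalDegree this
    rwa [monomial_sum_eq, Finsupp.single_eq_same, Finsupp.single_eq_of_ne (by decide)] at this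
  · have : (Finsupp.single 1 1 : Fin 2 →₀ ℕ) ∈ (linPoly a b c).support := by
      rw [MvPolynomial.mem_support_iff, coeff_linPoly1]; exact hb
    have := MvPolynomial.le_totalDegree this
    rwa [monomial_sum_eq, Finsupp.single_eq_same, Finsupp.single_eq_of_ne (by decide)] at this

lemma exists_affine (f : BPoly) (hf : f.totalDegree = 1) :
    ∃ a b c : ℝ, f = linPoly a b c ∧ ¬(a = 0 ∧ b = 0) := by
  refine ⟨_, _, _, eq_linear_of_totalDegree_le_one f hf.le, ?_⟩
  rintro ⟨ha, hb⟩
  have : f = C (coeff 0 f) := by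
    have h0 := eq_linear_of_totalDegree_le_one f hf.le
    rw [ha, hb] at h0; simpa using h0
  rw [this] at hf; simp at hf

lemma cross_eq_zero_imp (w0 w1 u0 u1 : ℝ) (h : w0 * u1 - w1 * u0 = 0)
    (hu : ¬(u0 = 0 ∧ u1 = 0)) : ∃ t : ℝ, w0 = t * u0 ∧ w1 = t * u1 := by
  have hd : u0 ^ 2 + u1 ^ 2 ≠ 0 := by
    intro h0
    exact hu ⟨by nlinarith [sq_nonneg u0, sq_nonneg u1], by nlinarith [sq_nonneg u0, sq_nonneg u1]⟩
  refine ⟨(w0 * u0 + w1 * u1) / (u0 ^ 2 + u1 ^ 2), ?_, ?_⟩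
  · field_simp
    linear_combination u1 * h
  · field_simp
    linear_combination (-u0) * h

/-- the affine line through two points, as a set -/
def affLine (P Q : Pt) : Set Pt :=
  {x | (x 0 - P 0) * (Q 1 - P 1) - (x 1 - P 1) * (Q 0 - P 0) = 0}

lemma mem_affLine_left (P Q : Pt) : P ∈ affLine P Q := by simp [affLine]

lemma mem_affLine_right (P Q : Pt) : Q ∈ affLine P Q := by
  show _ - _ = 0; ring

lemma pt_ne_iff (P Q : Pt) : P ≠ Q ↔ ¬(Q 0 - P 0 = 0 ∧ Q 1 - P 1 = 0) := by
  constructor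
  · intro h hc
    have h0 : P 0 = Q 0 := by linarith [hc.1]
    have h1 : P 1 = Q 1 := by linarith [hc.2]
    apply h; funext i; fin_cases i
    · exact h0
    · exact h1
  · intro h hc; subst hc; simp at h

lemma isLine_affLine (P Q : Pt) (h : P ≠ Q) : IsLine (affLine P Q) := by
  refine ⟨linPoly (Q 1 - P 1) (-(Q 0 - P 0)) (P 1 * (Q 0 - P 0) - P 0 * (Q 1 - P 1)), ?_, ?_⟩
  · refine totalDegree_linPoly_eq _ _ _ ?_
    rw [pt_ne_iff] at h
    intro hc; exact h ⟨by linarith [hc.2], by linarith [hc.1]⟩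
  · ext x
    simp only [affLine, Set.mem_setOf_eq, eval_linPoly]
    constructor <;> intro hx <;> linear_combination hx

lemma line_eq_affLine {L : Set Pt} (hL : IsLine L) {P Q : Pt} (hP : P ∈ L) (hQ : Q ∈ L)
    (hPQ : P ≠ Q) : L = affLine P Q := by
  obtain ⟨f, hdeg, rfl⟩ := hL
  obtain ⟨a, b, c, rfl, hab⟩ := exists_affine f hdeg
  rw [Set.mem_setOf_eq, eval_linPoly] at hP hQ
  ext x
  rw [Set.mem_setOf_eq, eval_linPoly]
  show _ ↔ _ - _ = 0
  constructor
  · intro hx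
    have h1 : a * (x 0 - P 0) + b * (x 1 - P 1) = 0 := by linear_combination hx - hP
    have h2 : a * (Q 0 - P 0) + b * (Q 1 - P 1) = 0 := by linear_combination hQ - hP
    rcases not_and_or.1 hab with ha | hb
    · have h3 : a * ((x 0 - P 0) * (Q 1 - P 1) - (x 1 - P 1) * (Q 0 - P 0)) = 0 := by
        linear_combination (Q 1 - P 1) * h1 - (x 1 - P 1) * h2
      exact (mul_eq_zero.1 h3).resolve_left ha
    · have h3 : b * ((x 0 - P 0) * (Q 1 - P 1) - (x 1 - P 1) * (Q 0 - P 0)) = 0 := by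
        linear_combination (x 0 - P 0) * h2 - (Q 0 - P 0) * h1
      exact (mul_eq_zero.1 h3).resolve_left hb
  · intro hx
    obtain ⟨t, ht0, ht1⟩ := cross_eq_zero_imp (x 0 - P 0) (x 1 - P 1) (Q 0 - P 0) (Q 1 - P 1)
      (by linear_combination hx) ((pt_ne_iff P Q).1 hPQ)
    linear_combination hP + t * hQ - t * hP + a * ht0 + b * ht1

/-- two lines sharing two distinct points are equal -/
lemma line_unique {L1 L2 : Set Pt} (h1 : IsLine L1) (h2 : IsLine L2) {P Q : Pt}
    (hP1 : P ∈ L1) (hQ1 : Q ∈ L1) (hP2 : P ∈ L2) (hQ2 : Q ∈ L2) (h : P ≠ Q) : L1 = L2 := by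
  rw [line_eq_affLine h1 hP1 hQ1 h, line_eq_affLine h2 hP2 hQ2 h]


lemma mv_aeval_eq_eval (x : Pt) (p : BPoly) : aeval x p = eval x p := by
  rw [aeval_def, Algebra.algebraMap_self]
  rfl

/-- restriction of a bivariate polynomial to a parametrized line -/
noncomputable def lineMap (P u : Pt) : BPoly →ₐ[ℝ] Polynomial ℝ :=
  MvPolynomial.aeval (fun i => Polynomial.C (P i) + Polynomial.C (u i) * Polynomial.X)

lemma natDegree_lineMap_le (P u : Pt) (p : BPoly) :
    (lineMap P u p).natDegree ≤ p.totalDegree := by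
  conv_lhs => rw [p.as_sum]
  rw [map_sum]
  refine le_trans (Polynomial.natDegree_sum_le _ _) ?_
  rw [Finset.fold_max_le]
  refine ⟨Nat.zero_le _, ?_⟩
  intro m hm
  simp only [Function.comp_apply]
  rw [lineMap, aeval_monomial]
  refine le_trans Polynomial.natDegree_mul_le ?_
  have h1 : (algebraMap ℝ (Polynomial ℝ) (coeff m p)).natDegree = 0 := by
    rw [Polynomial.algebraMap_eq]; exact Polynomial.natDegree_C _
  rw [h1, zero_add]
  rw [Finsupp.prod]
  refine le_trans (Polynomial.natDegree_prod_le _ _) ?_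
  refine le_trans ?_ (MvPolynomial.le_totalDegree hm)
  rw [Finsupp.sum]
  refine Finset.sum_le_sum ?_
  intro i _
  refine le_trans Polynomial.natDegree_pow_le ?_
  have h2 : (Polynomial.C (P i) + Polynomial.C (u i) * Polynomial.X).natDegree ≤ 1 := by
    refine le_trans (Polynomial.natDegree_add_le _ _) (max_le (by simp) ?_)
    exact le_trans Polynomial.natDegree_mul_le (by simp)
  calc m i * (Polynomial.C (P i) + Polynomial.C (u i) * Polynomial.X).natDegree
      ≤ m i * 1 := Nat.mul_le_mul_left _ h2
    _ = m i := Nat.mul_one _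

lemma eval_lineMap (P u : Pt) (t : ℝ) (p : BPoly) :
    Polynomial.eval t (lineMap P u p) = eval (fun i => P i + u i * t) p := by
  have h : (Polynomial.aeval t : Polynomial ℝ →ₐ[ℝ] ℝ).comp (lineMap P u)
      = MvPolynomial.aeval (fun i => P i + u i * t) := by
    rw [lineMap, comp_aeval]
    congr 1
    funext i
    simp only [map_add, map_mul, Polynomial.aeval_C, Polynomial.aeval_X,
      Algebra.algebraMap_self_apply]
  have h2 := DFunLike.congr_fun h p
  simp only [AlgHom.coe_comp, Function.comp_apply, mv_aeval_eq_eval] at h2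
  rw [← h2, Polynomial.coe_aeval_eq_eval]

/-- a polynomial of degree ≤ n vanishing at n+1 points of a line vanishes on the line -/
lemma vanish_on_line {f : BPoly} (hf : f.totalDegree = 1) {p : BPoly} {n : ℕ}
    (hp : p.totalDegree ≤ n) {S : Set Pt} (hSf : S.Finite) (hS : S ⊆ {x | eval x f = 0})
    (hcard : S.ncard = n + 1) (hvan : ∀ s ∈ S, eval s p = 0) (hn : 1 ≤ n) :
    ∀ y : Pt, eval y f = 0 → eval y p = 0 := by
  have hL : IsLine {x : Pt | eval x f = 0} := ⟨f, hf, rfl⟩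
  obtain ⟨P, Q, hPS, hQS, hPQ⟩ : ∃ P Q, P ∈ S ∧ Q ∈ S ∧ P ≠ Q := by
    rw [← Set.one_lt_ncard_iff hSf]
    omega
  set u : Pt := fun i => Q i - P i with hu
  have hu0 : ¬(u 0 = 0 ∧ u 1 = 0) := (pt_ne_iff P Q).1 hPQ
  set τ : Pt → ℝ := fun y => ((y 0 - P 0) * u 0 + (y 1 - P 1) * u 1) / (u 0 ^ 2 + u 1 ^ 2)
    with hτ
  have key : ∀ y ∈ {x : Pt | eval x f = 0}, y = fun i => P i + u i * τ y := by
    intro y hy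
    have hmem : y ∈ affLine P Q := by
      rw [← line_eq_affLine hL (hS hPS) (hS hQS) hPQ]
      exact hy
    obtain ⟨t, ht0, ht1⟩ := cross_eq_zero_imp (y 0 - P 0) (y 1 - P 1) (u 0) (u 1)
      (by simpa [affLine, hu] using hmem) hu0
    have hd : u 0 ^ 2 + u 1 ^ 2 ≠ 0 := by
      intro h0
      exact hu0 ⟨by nlinarith [sq_nonneg (u 0), sq_nonneg (u 1)],
        by nlinarith [sq_nonneg (u 0), sq_nonneg (u 1)]⟩
    have hty : τ y = t := by
      rw [hτ]
      field_simp
      rw [ht0, ht1]; ring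
    funext i
    fin_cases i
    · show y 0 = P 0 + u 0 * τ y
      rw [hty]; linarith [ht0]
    · show y 1 = P 1 + u 1 * τ y
      rw [hty]; linarith [ht1]
  set q := lineMap P u p with hq
  have hqdeg : q.natDegree ≤ n := le_trans (natDegree_lineMap_le P u p) hp
  have hq0 : q = 0 := by
    have hfin : Fintype ↥(hSf.toFinset : Finset Pt) := FinsetCoe.fintype _
    refine Polynomial.eq_zero_of_natDegree_lt_card_of_eval_eq_zero q
      (f := fun s : ↥(hSf.toFinset : Finset Pt) => τ (s : Pt)) ?_ ?_ ?_
    · intro s1 s2 h12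
      dsimp only at h12
      have e1 := key s1 (hS (hSf.mem_toFinset.mp s1.2))
      have e2 := key s2 (hS (hSf.mem_toFinset.mp s2.2))
      have h3 : (s1 : Pt) = s2 := by rw [e1, e2, h12]
      exact Subtype.ext h3
    · intro s
      have hsS : (s : Pt) ∈ S := hSf.mem_toFinset.mp s.2
      rw [hq, eval_lineMap, ← key (s : Pt) (hS hsS)]
      exact hvan _ hsS
    · have hcc : Fintype.card ↥(hSf.toFinset : Finset Pt) = n + 1 := by
        rw [Fintype.card_coe, ← Set.ncard_eq_toFinset_card S hSf, hcard]
      omega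
  intro y hy
  have := key y hy
  rw [this, ← eval_lineMap P u (τ y) p, ← hq, hq0]
  simp


lemma eval_aeval (y : Pt) (g : Fin 2 → BPoly) (p : BPoly) :
    eval y (aeval g p) = eval (fun i => eval y (g i)) p := by
  have h : (MvPolynomial.aeval y : BPoly →ₐ[ℝ] ℝ).comp (aeval g)
      = MvPolynomial.aeval (fun i => eval y (g i)) := by
    rw [comp_aeval]
    congr 1
  have h2 := DFunLike.congr_fun h p
  simp only [AlgHom.coe_comp, Function.comp_apply, mv_aeval_eq_eval] at h2
  exact h2

lemma totalDegree_aeval_le (g : Fin 2 → BPoly) (hg : ∀ i, (g i).totalDegree ≤ 1) (p : BPoly) :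
    (aeval g p).totalDegree ≤ p.totalDegree := by
  conv_lhs => rw [p.as_sum]
  rw [map_sum]
  refine le_trans (totalDegree_finset_sum _ _) ?_
  refine Finset.sup_le ?_
  intro m hm
  rw [aeval_monomial]
  refine le_trans (totalDegree_mul _ _) ?_
  have h1 : (algebraMap ℝ BPoly (coeff m p)).totalDegree = 0 := by
    rw [MvPolynomial.algebraMap_eq]; exact totalDegree_C _
  rw [h1, zero_add, Finsupp.prod]
  refine le_trans (totalDegree_finset_prod _ _) ?_
  refine le_trans ?_ (MvPolynomial.le_totalDegree hm)
  rw [Finsupp.sum]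
  refine Finset.sum_le_sum ?_
  intro i _
  refine le_trans (totalDegree_pow _ _) ?_
  calc m i * (g i).totalDegree ≤ m i * 1 := Nat.mul_le_mul_left _ (hg i)
    _ = m i := Nat.mul_one _

/-- if a polynomial vanishes on the locus `x₁ = 0`, it is divisible by `X 1` -/
lemma X1_dvd_of_vanish (q : BPoly) (h : ∀ y : Pt, y 1 = 0 → eval y q = 0) : X 1 ∣ q := by
  set ψ : BPoly →ₐ[ℝ] BPoly := MvPolynomial.aeval ![X 0, 0] with hψ
  have hstep : X 1 ∣ q - ψ q := by
    have hrepr : q - ψ q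
        = ∑ m ∈ q.support, (monomial m (coeff m q) - ψ (monomial m (coeff m q))) := by
      rw [Finset.sum_sub_distrib, ← map_sum, ← q.as_sum]
    rw [hrepr]
    refine Finset.dvd_sum ?_
    intro m _
    by_cases h1 : m 1 = 0
    · have heq : ψ (monomial m (coeff m q)) = monomial m (coeff m q) := by
        rw [hψ, aeval_monomial, MvPolynomial.algebraMap_eq, monomial_eq]
        congr 1
        refine Finsupp.prod_congr ?_
        intro i hi
        fin_cases i
        · rfl
        · exact absurd (Finsupp.mem_support_iff.1 hi) (by simpa using h1)
      rw [heq, sub_self]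
      exact dvd_zero _
    · have heq : ψ (monomial m (coeff m q)) = 0 := by
        rw [hψ, aeval_monomial, Finsupp.prod]
        have hmem : (1 : Fin 2) ∈ m.support := Finsupp.mem_support_iff.2 h1
        rw [Finset.prod_eq_zero hmem (by simp [zero_pow h1])]
        ring
      rw [heq, sub_zero, monomial_eq]
      refine Dvd.dvd.mul_left ?_ _
      refine dvd_trans (dvd_pow_self (X 1 : BPoly) h1) ?_
      exact Finset.dvd_prod_of_mem _ (Finsupp.mem_support_iff.2 h1)
  have hzero : ψ q = 0 := by
    apply MvPolynomial.funext
    intro x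
    rw [hψ, eval_aeval]
    rw [map_zero]
    refine h _ ?_
    simp
  have hfin : q - ψ q = q := by rw [hzero, sub_zero]
  rwa [hfin] at hstep

section LineAut

variable (a b c : ℝ)

noncomputable def Gmap : Fin 2 → BPoly :=
  ![linPoly (-((a ^ 2 + b ^ 2)⁻¹ * b)) ((a ^ 2 + b ^ 2)⁻¹ * a) (-((a ^ 2 + b ^ 2)⁻¹ * (a * c))),
    linPoly ((a ^ 2 + b ^ 2)⁻¹ * a) ((a ^ 2 + b ^ 2)⁻¹ * b) (-((a ^ 2 + b ^ 2)⁻¹ * (b * c)))]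

noncomputable def Umap : Fin 2 → BPoly :=
  ![linPoly (-b) a 0, linPoly a b c]

variable (hab : ¬(a = 0 ∧ b = 0))
include hab

lemma hd_ne : a ^ 2 + b ^ 2 ≠ 0 := by
  intro h0
  exact hab ⟨by nlinarith [sq_nonneg a, sq_nonneg b], by nlinarith [sq_nonneg a, sq_nonneg b]⟩

lemma keyC : (C ((a ^ 2 + b ^ 2)⁻¹) : BPoly) * (C a * C a + C b * C b) = 1 := by
  rw [← C_mul, ← C_mul, ← C_add, ← C_mul, ← C_1]
  congr 1
  have hd := hd_ne a b hab
  field_simp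

lemma comp_GU : (MvPolynomial.aeval (Gmap a b c) : BPoly →ₐ[ℝ] BPoly).comp
    (MvPolynomial.aeval (Umap a b c)) = AlgHom.id ℝ BPoly := by
  have hC := keyC a b hab
  apply MvPolynomial.algHom_ext
  intro i
  fin_cases i <;>
    simp only [Fin.zero_eta, Fin.mk_one, Fin.isValue, AlgHom.coe_comp, Function.comp_apply,
      aeval_X, AlgHom.coe_id, id_eq, Umap, Gmap, Matrix.cons_val_zero, Matrix.cons_val_one,
      Matrix.head_cons, linPoly, map_add, map_mul, map_neg, map_zero, aeval_C,
      MvPolynomial.algebraMap_eq]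
  · linear_combination (X 0 : BPoly) * hC
  · linear_combination ((X 1 : BPoly) - C c) * hC

lemma comp_UG : (MvPolynomial.aeval (Umap a b c) : BPoly →ₐ[ℝ] BPoly).comp
    (MvPolynomial.aeval (Gmap a b c)) = AlgHom.id ℝ BPoly := by
  have hC := keyC a b hab
  apply MvPolynomial.algHom_ext
  intro i
  fin_cases i <;>
    simp only [Fin.zero_eta, Fin.mk_one, Fin.isValue, AlgHom.coe_comp, Function.comp_apply,
      aeval_X, AlgHom.coe_id, id_eq, Umap, Gmap, Matrix.cons_val_zero, Matrix.cons_val_one,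
      Matrix.head_cons, linPoly, map_add, map_mul, map_neg, map_zero, aeval_C,
      MvPolynomial.algebraMap_eq]
  · linear_combination (X 0 : BPoly) * hC
  · linear_combination (X 1 : BPoly) * hC

/-- affine change of coordinates taking the linear polynomial `a x₀ + b x₁ + c` to `X 1` -/
noncomputable def lineAut : BPoly ≃ₐ[ℝ] BPoly :=
  AlgEquiv.ofAlgHom (MvPolynomial.aeval (Gmap a b c)) (MvPolynomial.aeval (Umap a b c))
    (comp_GU a b c hab) (comp_UG a b c hab)

lemma lineAut_apply (p : BPoly) : lineAut a b c hab p = MvPolynomial.aeval (Gmap a b c) p := rfl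

lemma lineAut_symm_apply (p : BPoly) :
    (lineAut a b c hab).symm p = MvPolynomial.aeval (Umap a b c) p := by
  rw [lineAut, AlgEquiv.ofAlgHom_symm_apply]

lemma lineAut_linPoly : lineAut a b c hab (linPoly a b c) = X 1 := by
  have hC := keyC a b hab
  rw [lineAut_apply]
  simp only [Fin.zero_eta, Fin.mk_one, Fin.isValue, Gmap, linPoly, map_add, map_mul, map_neg,
    aeval_C, aeval_X, MvPolynomial.algebraMap_eq, Matrix.cons_val_zero, Matrix.cons_val_one,
    Matrix.head_cons]
  linear_combination ((X 1 : BPoly) - C c) * hC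

lemma totalDegree_lineAut_eq (p : BPoly) :
    (lineAut a b c hab p).totalDegree = p.totalDegree := by
  have hG : ∀ i, ((Gmap a b c) i).totalDegree ≤ 1 := by
    intro i; fin_cases i <;> exact totalDegree_linPoly_le _ _ _
  have hU : ∀ i, ((Umap a b c) i).totalDegree ≤ 1 := by
    intro i; fin_cases i <;> exact totalDegree_linPoly_le _ _ _
  refine le_antisymm (totalDegree_aeval_le _ hG _) ?_
  have h2 : ((lineAut a b c hab).symm (lineAut a b c hab p)).totalDegree
      ≤ (lineAut a b c hab p).totalDegree := by
    rw [lineAut_symm_apply]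
    exact totalDegree_aeval_le _ hU _
  rwa [AlgEquiv.symm_apply_apply] at h2

end LineAut

/-- a linear polynomial divides any polynomial vanishing on its zero set -/
lemma dvd_of_vanish_line (f : BPoly) (hf : f.totalDegree = 1) (p : BPoly)
    (h : ∀ y : Pt, eval y f = 0 → eval y p = 0) : f ∣ p := by
  obtain ⟨a, b, c, rfl, hab⟩ := exists_affine f hf
  set E := lineAut a b c hab with hE
  have hvan : ∀ y : Pt, y 1 = 0 → eval y (E p) = 0 := by
    intro y hy
    rw [lineAut_apply, eval_aeval]
    refine h _ ?_
    rw [← eval_aeval, ← lineAut_apply a b c hab, lineAut_linPoly]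
    simpa using hy
  obtain ⟨r, hr⟩ := X1_dvd_of_vanish (E p) hvan
  refine ⟨E.symm r, ?_⟩
  have : E.symm (E p) = E.symm (X 1 * r) := by rw [hr]
  rw [AlgEquiv.symm_apply_apply, map_mul] at this
  rw [this]
  congr 1
  rw [← lineAut_linPoly a b c hab, ← hE, AlgEquiv.symm_apply_apply]

/-- degree of a product with a linear polynomial -/
lemma totalDegree_linear_mul (f q : BPoly) (hf : f.totalDegree = 1) (hq : q ≠ 0) :
    (f * q).totalDegree = q.totalDegree + 1 := by
  obtain ⟨a, b, c, rfl, hab⟩ := exists_affine f hf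
  set E := lineAut a b c hab with hE
  have h1 : (E (linPoly a b c * q)).totalDegree = (X 1 * E q).totalDegree := by
    rw [map_mul, lineAut_linPoly]
  have hEq : (E q) ≠ 0 := fun h0 => hq (by
    have := congrArg E.symm h0
    rwa [AlgEquiv.symm_apply_apply, map_zero] at this)
  have h2 : (X 1 * E q).totalDegree = (E q).totalDegree + 1 := by
    refine le_antisymm ?_ ?_
    · refine le_trans (totalDegree_mul _ _) ?_
      rw [totalDegree_X]
      omega
    · obtain ⟨m, hm, hms⟩ := Finset.exists_mem_eq_sup _ (support_nonempty.2 hEq)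
        (fun m : Fin 2 →₀ ℕ => m.sum fun _ e => e)
      have hmem : Finsupp.single 1 1 + m ∈ (X 1 * E q).support := by
        rw [support_X_mul]
        exact Finset.mem_map.2 ⟨m, hm, rfl⟩
      have hle := MvPolynomial.le_totalDegree hmem
      rw [Finsupp.sum_add_index' (fun _ => rfl) (fun _ _ _ => rfl)] at hle
      have hsum : (Finsupp.single (1 : Fin 2) 1).sum (fun _ e => e) = 1 := by
        rw [monomial_sum_eq]; simp
      rw [hsum] at hle
      have : (E q).totalDegree = m.sum fun _ e => e := hms
      omega
  have h3 : (E q).totalDegree = q.totalDegree := totalDegree_lineAut_eq a b c hab q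
  have h4 : (E (linPoly a b c * q)).totalDegree = (linPoly a b c * q).totalDegree :=
    totalDegree_lineAut_eq a b c hab _
  rw [← h4, h1, h2, h3]


lemma tri_mul_two (n : ℕ) : (n + 1) * (n + 2) / 2 * 2 = (n + 1) * (n + 2) := by
  refine Nat.div_mul_cancel ?_
  have h := Nat.even_mul_succ_self (n + 1)
  have h2 : (n + 1) * (n + 2) = (n + 1) * (n + 1 + 1) := by ring
  rw [h2]
  exact h.two_dvd

lemma poised_finite {n : ℕ} {X : Set Pt} (h : IsPoised n X) : X.Finite := by
  by_contra hinf
  have h0 := Set.Infinite.ncard (hinf : X.Infinite)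
  rw [h.1] at h0
  have h2 : (n + 1) * (n + 2) / 2 * 2 = (n + 1) * (n + 2) := tri_mul_two n
  nlinarith [Nat.zero_le n]

lemma exists_fund {n : ℕ} {X : Set Pt} (h : IsPoised n X) {A : Pt} (hA : A ∈ X) :
    ∃ p : BPoly, IsFund n X A p := by
  obtain ⟨p, ⟨hdeg, hval⟩, -⟩ := h.2 (fun B => if B = A then 1 else 0)
  exact ⟨p, hdeg, by simpa using hval A hA, fun B hB hBA => by simpa [hBA] using hval B hB⟩

/-- a line passes through at most n+1 nodes of an n-poised set -/
lemma line_ncard_le {n : ℕ} {X : Set Pt} (hn : 1 ≤ n) (h : IsPoised n X) (f : BPoly)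
    (hf : f.totalDegree = 1) : (X ∩ {x : Pt | eval x f = 0}).ncard ≤ n + 1 := by
  by_contra hc
  push_neg at hc
  obtain ⟨T, hTsub, hTcard⟩ := Set.exists_subset_card_eq (Nat.succ_le_of_lt hc)
  have hXfin := poised_finite h
  have hTfin : T.Finite := (hXfin.inter_of_left _).subset hTsub
  obtain ⟨A, hAT⟩ : T.Nonempty := Set.nonempty_of_ncard_ne_zero (by omega)
  have hAX : A ∈ X := (hTsub hAT).1
  obtain ⟨p, hpdeg, hpA, hpvan⟩ := exists_fund h hAX
  have hScard : (T \ {A}).ncard = n + 1 := by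
    rw [Set.ncard_diff_singleton_of_mem hAT]
    omega
  have hvan : ∀ s ∈ T \ {A}, eval s p = 0 := by
    rintro s ⟨hsT, hsA⟩
    exact hpvan s (hTsub hsT).1 (by simpa using hsA)
  have hzero := vanish_on_line hf hpdeg (hTfin.diff (t := {A}))
    (fun s hs => (hTsub hs.1).2) hScard hvan hn A (hTsub hAT).2
  rw [hpA] at hzero
  exact one_ne_zero hzero

/-- peeling a maximal line off a poised set -/
lemma peel {m : ℕ} {X : Set Pt} (h : IsPoised (m + 1) X) (f : BPoly) (hf : f.totalDegree = 1)
    (hline : (X ∩ {x : Pt | eval x f = 0}).ncard = m + 2) :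
    IsPoised m (X \ {x : Pt | eval x f = 0}) := by
  have hXfin := poised_finite h
  have hf0 : f ≠ 0 := fun h0 => by simp [h0] at hf
  constructor
  · have hdiff : X \ {x : Pt | eval x f = 0} = X \ (X ∩ {x : Pt | eval x f = 0}) := by
      ext x
      simp only [Set.mem_diff, Set.mem_inter_iff]
      tauto
    rw [hdiff, Set.ncard_diff Set.inter_subset_left (hXfin.inter_of_left _), hline, h.1]
    have h2a := tri_mul_two (m + 1)
    have h2b := tri_mul_two m
    have h2c : (m + 1 + 1) * (m + 1 + 2) = (m + 1) * (m + 2) + 2 * (m + 2) := by ring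
    omega
  · intro c
    obtain ⟨p, ⟨hpdeg, hpval⟩, hpuniq⟩ := h.2 (fun B => eval B f * c B)
    have hpvanZ : ∀ s ∈ X ∩ {x : Pt | eval x f = 0}, eval s p = 0 := by
      rintro s ⟨hsX, hsZ⟩
      rw [hpval s hsX, Set.mem_setOf_eq.mp hsZ, zero_mul]
    have hvanish := vanish_on_line hf hpdeg (hXfin.inter_of_left _)
      (fun s hs => hs.2) hline hpvanZ (Nat.le_add_left 1 m)
    obtain ⟨q, rfl⟩ := dvd_of_vanish_line f hf p hvanish
    have hqdeg : q.totalDegree ≤ m := by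
      rcases eq_or_ne q 0 with rfl | hq0
      · simp
      · have := totalDegree_linear_mul f q hf hq0
        omega
    have hqval : ∀ B ∈ X \ {x : Pt | eval x f = 0}, eval B q = c B := by
      rintro B ⟨hBX, hBZ⟩
      have hfB : eval B f ≠ 0 := hBZ
      have := hpval B hBX
      rw [map_mul] at this
      exact mul_left_cancel₀ hfB this
    refine ⟨q, ⟨hqdeg, hqval⟩, ?_⟩
    rintro q' ⟨hq'deg, hq'val⟩
    have hfq' : f * q' = f * q := by
      refine hpuniq (f * q') ⟨?_, ?_⟩
      · refine le_trans (totalDegree_mul _ _) ?_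
        rw [hf]
        omega
      · intro B hBX
        rw [map_mul]
        by_cases hBZ : B ∈ {x : Pt | eval x f = 0}
        · rw [Set.mem_setOf_eq.mp hBZ, zero_mul, zero_mul]
        · rw [hq'val B ⟨hBX, hBZ⟩]
    exact mul_left_cancel₀ hf0 hfq'


lemma line_ncard_le' {n : ℕ} {X : Set Pt} (hn : 1 ≤ n) (h : IsPoised n X) {L : Set Pt}
    (hL : IsLine L) : (X ∩ L).ncard ≤ n + 1 := by
  obtain ⟨f, hf, rfl⟩ := hL
  exact line_ncard_le hn h f hf

lemma peel' {m : ℕ} {X : Set Pt} (h : IsPoised (m + 1) X) {L : Set Pt} (hL : IsLine L)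
    (hmax : (X ∩ L).ncard = m + 2) : IsPoised m (X \ L) := by
  obtain ⟨f, hf, rfl⟩ := hL
  exact peel h f hf hmax

/-- intersection of two distinct lines is a subsingleton -/
lemma lines_inter_subsingleton {L1 L2 : Set Pt} (h1 : IsLine L1) (h2 : IsLine L2)
    (hne : L1 ≠ L2) {P Q : Pt} (hP : P ∈ L1 ∩ L2) (hQ : Q ∈ L1 ∩ L2) : P = Q := by
  by_contra hPQ
  exact hne (line_unique h1 h2 hP.1 hQ.1 hP.2 hQ.2 hPQ)

/-- two distinct maximal lines of a poised set meet at a node -/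
lemma maxlines_meet {m : ℕ} (hm : 1 ≤ m) {X : Set Pt} (h : IsPoised (m + 1) X) {L1 L2 : Set Pt}
    (h1 : IsMaxLine (m + 1) X L1) (h2 : IsMaxLine (m + 1) X L2) (hne : L1 ≠ L2) :
    ∃ P, P ∈ X ∩ L1 ∩ L2 := by
  by_contra hc
  push_neg at hc
  have hY : IsPoised m (X \ L1) := peel' h h1.1 h1.2
  have hsub : X ∩ L2 ⊆ (X \ L1) ∩ L2 := by
    rintro x ⟨hxX, hxL2⟩
    exact ⟨⟨hxX, fun hxL1 => hc x ⟨⟨hxX, hxL1⟩, hxL2⟩⟩, hxL2⟩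
  have hcard : m + 2 ≤ ((X \ L1) ∩ L2).ncard := by
    rw [← h2.2]
    refine Set.ncard_le_ncard hsub ?_
    exact ((poised_finite h).diff (t := L1)).inter_of_left _
  have hle := line_ncard_le' hm hY h2.1
  omega

/-- no three distinct maximal lines are concurrent at a node -/
lemma no_three_concurrent {m : ℕ} {X : Set Pt} (h : IsPoised (m + 3) X) {L1 L2 L3 : Set Pt}
    (h1 : IsMaxLine (m + 3) X L1) (h2 : IsMaxLine (m + 3) X L2) (h3 : IsMaxLine (m + 3) X L3)
    (h12 : L1 ≠ L2) (h13 : L1 ≠ L3) (h23 : L2 ≠ L3) {P : Pt}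
    (hP : P ∈ X ∩ L1 ∩ L2 ∩ L3) : False := by
  obtain ⟨⟨⟨hPX, hP1⟩, hP2⟩, hP3⟩ := hP
  have hXfin := poised_finite h
  have hY1 : IsPoised (m + 2) (X \ L1) := peel' h h1.1 h1.2
  have hL2Y1 : (X \ L1) ∩ L2 = (X ∩ L2) \ {P} := by
    ext x
    simp only [Set.mem_diff, Set.mem_inter_iff, Set.mem_singleton_iff]
    constructor
    · rintro ⟨⟨hxX, hx1⟩, hx2⟩
      exact ⟨⟨hxX, hx2⟩, fun hxP => hx1 (hxP ▸ hP1)⟩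
    · rintro ⟨⟨hxX, hx2⟩, hxP⟩
      refine ⟨⟨hxX, fun hx1 => hxP ?_⟩, hx2⟩
      exact lines_inter_subsingleton h1.1 h2.1 h12 ⟨hx1, hx2⟩ ⟨hP1, hP2⟩
  have hcard2 : ((X \ L1) ∩ L2).ncard = m + 3 := by
    have hmem : P ∈ X ∩ L2 := ⟨hPX, hP2⟩
    rw [hL2Y1, Set.ncard_diff_singleton_of_mem hmem, h2.2]
    omega
  have hY2 : IsPoised (m + 1) ((X \ L1) \ L2) := peel' hY1 h2.1 hcard2
  have hL3Y2 : ((X \ L1) \ L2) ∩ L3 = (X ∩ L3) \ {P} := by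
    ext x
    simp only [Set.mem_diff, Set.mem_inter_iff, Set.mem_singleton_iff]
    constructor
    · rintro ⟨⟨⟨hxX, hx1⟩, hx2⟩, hx3⟩
      exact ⟨⟨hxX, hx3⟩, fun hxP => hx1 (hxP ▸ hP1)⟩
    · rintro ⟨⟨hxX, hx3⟩, hxP⟩
      refine ⟨⟨⟨hxX, fun hx1 => hxP ?_⟩, fun hx2 => hxP ?_⟩, hx3⟩
      · exact lines_inter_subsingleton h1.1 h3.1 h13 ⟨hx1, hx3⟩ ⟨hP1, hP3⟩
      · exact lines_inter_subsingleton h2.1 h3.1 h23 ⟨hx2, hx3⟩ ⟨hP2, hP3⟩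
  have hcard3 : (((X \ L1) \ L2) ∩ L3).ncard = m + 3 := by
    have hmem : P ∈ X ∩ L3 := ⟨hPX, hP3⟩
    rw [hL3Y2, Set.ncard_diff_singleton_of_mem hmem, h3.2]
    omega
  have hle := line_ncard_le' (Nat.le_add_left 1 m) hY2 h3.1
  omega


/-- the combinatorial heart: a "cycle" pattern is only possible for n = 3 -/
lemma comb {n : ℕ} {α : Type*} (hn3 : n ≠ 3) (a b : Fin n → α)
    (hab : ∀ i, a i ≠ b i) (ha : ∀ i j, i ≠ j → a i ≠ a j)
    (h : ∀ i j, i ≠ j → b i = b j ∨ a i = b j ∨ a j = b i) :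
    (∀ i j, b i = b j) ∨ ∃ j, ∀ i, i ≠ j → b i = a j := by
  by_cases hb : ∀ i j, b i = b j
  · exact Or.inl hb
  right
  by_contra hr
  push_neg at hr
  push_neg at hb
  obtain ⟨i0, j0, hbij⟩ := hb
  have hij0 : i0 ≠ j0 := fun he => hbij (he ▸ rfl)
  obtain ⟨i, j, hij, hba, hbb⟩ : ∃ i j, i ≠ j ∧ b i = a j ∧ b i ≠ b j := by
    rcases h i0 j0 hij0 with h1 | h1 | h1
    · exact absurd h1 hbij
    · exact ⟨j0, i0, hij0.symm, h1.symm, fun he => hbij he.symm⟩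
    · exact ⟨i0, j0, hij0, h1.symm, hbij⟩
  obtain ⟨k, hkj, hk⟩ := hr j
  have hki : k ≠ i := fun he => hk (he ▸ hba)
  have hbk : b k = a i := by
    rcases h k i hki with h1 | h1 | h1
    · exact absurd (h1.trans hba) hk
    · exact absurd (h1.trans hba) (ha k j hkj)
    · exact h1.symm
  rcases h k j hkj with h2 | h2 | h2
  · -- b k = b j, so b j = a i
    have hbj : b j = a i := h2.symm.trans hbk
    obtain ⟨m, hmi, hm⟩ := hr i
    have hmj : m ≠ j := fun he => hm (he ▸ hbj)
    have hmk : m ≠ k := fun he => hm (he ▸ hbk)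
    have hbm : b m = a j := by
      rcases h m i hmi with h3 | h3 | h3
      · exact h3.trans hba
      · exact absurd (h3.trans hba) (ha m j hmj)
      · exact absurd h3.symm hm
    rcases h m k hmk with h4 | h4 | h4
    · exact absurd (hbm.symm.trans (h4.trans hbk)) (ha j i (Ne.symm hij))
    · exact absurd (h4.trans hbk) (ha m i hmi)
    · exact absurd (h4.trans hbm) (ha k j hkj)
  · -- a k = b j : the 3-cycle case, need a fourth index
    have hbj : b j = a k := h2.symm
    have hjk : j ≠ k := Ne.symm hkj
    have hik : i ≠ k := Ne.symm hki
    have hbkj : b k ≠ b j := fun he => ha i k hik ((hbk.symm.trans he).trans hbj)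
    have hbki : b k ≠ b i := fun he => ha i j hij (hbk.symm.trans (he.trans hba))
    have h3le : 3 ≤ n := by
      have hcard : ({i, j, k} : Finset (Fin n)).card = 3 := by
        rw [Finset.card_insert_of_notMem (by simp [hij, hik]),
          Finset.card_insert_of_notMem (by simp [hjk])]
        simp
      calc 3 = ({i, j, k} : Finset (Fin n)).card := hcard.symm
        _ ≤ (Finset.univ : Finset (Fin n)).card := Finset.card_le_card (Finset.subset_univ _)
        _ = n := Finset.card_univ.trans (Fintype.card_fin n)
    have h4le : 4 ≤ n := by omega
    obtain ⟨m, hmijk⟩ : ∃ m : Fin n, m ∉ ({i, j, k} : Finset (Fin n)) := by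
      by_contra hc
      push_neg at hc
      have hsub := Finset.card_le_card (fun x _ => hc x : (Finset.univ : Finset (Fin n)) ⊆ _)
      have hle3 : ({i, j, k} : Finset (Fin n)).card ≤ 3 := by
        refine le_trans (Finset.card_insert_le _ _) ?_
        refine Nat.succ_le_succ (le_trans (Finset.card_insert_le _ _) ?_)
        simp
      rw [Finset.card_univ, Fintype.card_fin] at hsub
      omega
    simp only [Finset.mem_insert, Finset.mem_singleton, not_or] at hmijk
    obtain ⟨hmi, hmj, hmk⟩ := hmijk
    have c1 : b m = b i ∨ b m = b k := by
      rcases h m i hmi with h3 | h3 | h3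
      · exact Or.inl h3
      · exact absurd (h3.trans hba) (ha m j hmj)
      · exact Or.inr (h3.symm.trans hbk.symm)
    have c2 : b m = b j ∨ b m = b i := by
      rcases h m j hmj with h3 | h3 | h3
      · exact Or.inl h3
      · exact absurd (h3.trans hbj) (ha m k hmk)
      · exact Or.inr (h3.symm.trans hba.symm)
    have c3 : b m = b k ∨ b m = b j := by
      rcases h m k hmk with h3 | h3 | h3
      · exact Or.inl h3
      · exact absurd (h3.trans hbk) (ha m i hmi)
      · exact Or.inr (h3.symm.trans hbj.symm)
    rcases c1 with d1 | d1 <;> rcases c2 with d2 | d2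
    · exact hbb (d1.symm.trans d2)
    · rcases c3 with d3 | d3
      · exact hbki (d3.symm.trans d1)
      · exact hbb (d1.symm.trans d3)
    · exact hbkj (d1.symm.trans d2)
    · exact hbki (d1.symm.trans d2)
  · exact hk h2.symm


/-- counting the nodes covered by the n maximal lines -/
lemma union_count {n : ℕ} {X : Set Pt} (hXfin : X.Finite) (M : Fin n → Set Pt)
    (hMcard : ∀ i, (X ∩ M i).ncard = n + 1)
    (Pf : Fin n → Fin n → Pt)
    (hPf : ∀ i j, i ≠ j → X ∩ M i ∩ M j = {Pf i j})
    (hPne : ∀ i j k, i ≠ k → j ≠ k → i ≠ j → Pf i k ≠ Pf j k) :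
    (⋃ i, (X ∩ M i)).ncard * 2 = n * n + 3 * n := by
  suffices h : ∀ s : Finset (Fin n),
      (⋃ i ∈ s, (X ∩ M i)).ncard * 2 + s.card * s.card = s.card * (2 * n + 3) by
    have hu := h Finset.univ
    rw [Finset.card_univ, Fintype.card_fin] at hu
    have heq : ⋃ i, (X ∩ M i) = ⋃ i ∈ Finset.univ, (X ∩ M i) := by simp
    rw [heq]
    zify at hu ⊢
    linear_combination hu
  intro s
  induction s using Finset.induction_on with
  | empty => simp
  | @insert k s hk ih =>
    have hins : ⋃ i ∈ insert k s, (X ∩ M i) = (X ∩ M k) ∪ ⋃ i ∈ s, (X ∩ M i) :=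
      Finset.set_biUnion_insert _ _ _
    set U := ⋃ i ∈ s, (X ∩ M i) with hU
    have hUfin : U.Finite := Set.Finite.biUnion s.finite_toSet (fun i _ => hXfin.inter_of_left _)
    have hXkfin : (X ∩ M k).Finite := hXfin.inter_of_left _
    have hunion := Set.ncard_union_add_ncard_inter (X ∩ M k) U hXkfin hUfin
    have hint : (X ∩ M k) ∩ U = (fun i => Pf i k) '' ↑s := by
      ext x
      simp only [hU, Set.mem_inter_iff, Set.mem_iUnion, Set.mem_image, Finset.mem_coe,
        exists_prop]
      constructor
      · rintro ⟨hxk, i, hi, hxi⟩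
        have hik : i ≠ k := fun he => hk (he ▸ hi)
        have hx : x ∈ X ∩ M i ∩ M k := ⟨hxi, hxk.2⟩
        rw [hPf i k hik] at hx
        exact ⟨i, hi, hx.symm⟩
      · rintro ⟨i, hi, rfl⟩
        have hik : i ≠ k := fun he => hk (he ▸ hi)
        have hmem : Pf i k ∈ X ∩ M i ∩ M k := by
          rw [hPf i k hik]; rfl
        exact ⟨⟨hmem.1.1, hmem.2⟩, i, hi, hmem.1⟩
    have hinj : Set.InjOn (fun i => Pf i k) ↑s := by
      intro i hi j hj hij_eq
      by_contra hne
      have hik : i ≠ k := fun he => hk (he ▸ (Finset.mem_coe.mp hi))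
      have hjk : j ≠ k := fun he => hk (he ▸ (Finset.mem_coe.mp hj))
      exact hPne i j k hik hjk hne hij_eq
    have hintcard : ((X ∩ M k) ∩ U).ncard = s.card := by
      rw [hint, Set.ncard_image_of_injOn hinj, Set.ncard_coe_finset]
    rw [hins]
    rw [hintcard, hMcard k] at hunion
    rw [Finset.card_insert_of_notMem hk]
    zify at hunion ih ⊢
    linear_combination 2 * hunion + ih


lemma three_le_of_distinct {n : ℕ} (i j k : Fin n) (hij : i ≠ j) (hik : i ≠ k) (hjk : j ≠ k) :
    3 ≤ n := by
  have hcard : ({i, j, k} : Finset (Fin n)).card = 3 := by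
    rw [Finset.card_insert_of_notMem (by simp [hij, hik]),
      Finset.card_insert_of_notMem (by simp [hjk])]
    simp
  calc 3 = ({i, j, k} : Finset (Fin n)).card := hcard.symm
    _ ≤ (Finset.univ : Finset (Fin n)).card := Finset.card_le_card (Finset.subset_univ _)
    _ = n := Finset.card_univ.trans (Fintype.card_fin n)


/-- three points are collinear -/
def Col (x y z : Pt) : Prop := ∃ L, IsLine L ∧ x ∈ L ∧ y ∈ L ∧ z ∈ L

end GCAux









/-- Let `X` be a `GC_n` set, `n ≥ 1`, `n ≠ 3`, and `ℓ` an `n`-node line of `X`.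
If there are `n` distinct maximal lines passing through `n` distinct nodes of `X` on `ℓ`
(one through each), then `X` has at least `n + 1` maximal lines. -/
theorem exists_further_maxLine (n : ℕ) (hn : 1 ≤ n) (hn3 : n ≠ 3)
    (X ℓ : Set Pt) (hX : IsGC n X) (hℓ : IsNodeLine n X ℓ)
    (M : Fin n → Set Pt) (A : Fin n → Pt)
    (hMinj : Function.Injective M) (hAinj : Function.Injective A)
    (hM : ∀ i, IsMaxLine n X (M i))
    (hA : ∀ i, A i ∈ X ∧ A i ∈ ℓ ∧ A i ∈ M i) :
    n + 1 ≤ {L : Set Pt | IsMaxLine n X L}.ncard := by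
  classical
  obtain ⟨hP, hGC⟩ := hX
  have hXfin := GCAux.poised_finite hP
  obtain ⟨hℓline, hℓcard⟩ := hℓ
  have hMline : ∀ i, IsLine (M i) := fun i => (hM i).1
  have hMcard : ∀ i, (X ∩ M i).ncard = n + 1 := fun i => (hM i).2
  have hAX : ∀ i, A i ∈ X := fun i => (hA i).1
  have hAl : ∀ i, A i ∈ ℓ := fun i => (hA i).2.1
  have hAM : ∀ i, A i ∈ M i := fun i => (hA i).2.2
  have hMl : ∀ i, M i ≠ ℓ := by
    intro i he
    have h1 := hMcard i
    rw [he, hℓcard] at h1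
    omega
  have hMne : ∀ i j, i ≠ j → M i ≠ M j := fun i j hij he => hij (hMinj he)
  have hrange : Set.range A = X ∩ ℓ := by
    refine Set.eq_of_subset_of_ncard_le ?_ ?_ (hXfin.inter_of_left _)
    · rintro x ⟨i, rfl⟩
      exact ⟨hAX i, hAl i⟩
    · rw [hℓcard, ← Set.image_univ, Set.ncard_image_of_injective _ hAinj, Set.ncard_univ]
      simp
  have hAnotM : ∀ i j, i ≠ j → A i ∉ M j := by
    intro i j hij hmem
    have h1 : A i ∈ M j ∩ ℓ := ⟨hmem, hAl i⟩
    have h2 : A j ∈ M j ∩ ℓ := ⟨hAM j, hAl j⟩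
    exact hij (hAinj (GCAux.lines_inter_subsingleton (hMline j) hℓline (hMl j) h1 h2))
  obtain ⟨m0, rfl⟩ : ∃ m0, n = m0 + 1 := ⟨n - 1, by omega⟩
  -- intersection nodes of pairs of maximal lines
  have hPex : ∀ i j : Fin (m0 + 1), ∃ P, i ≠ j → P ∈ X ∩ M i ∩ M j := by
    intro i j
    by_cases hij : i ≠ j
    · have hm0 : 1 ≤ m0 := by
        rcases Nat.eq_zero_or_pos m0 with h0 | h1
        · exfalso
          apply hij
          apply Fin.ext
          have hi := i.isLt
          have hj := j.isLt
          omega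
        · exact h1
      obtain ⟨P, hP'⟩ := GCAux.maxlines_meet hm0 hP (hM i) (hM j) (hMne i j hij)
      exact ⟨P, fun _ => hP'⟩
    · exact ⟨A i, fun h => absurd h hij⟩
  choose Pf hPmem using hPex
  have hPuniq : ∀ i j, i ≠ j → X ∩ M i ∩ M j = {Pf i j} := by
    intro i j hij
    ext x
    simp only [Set.mem_singleton_iff]
    constructor
    · intro hx
      exact GCAux.lines_inter_subsingleton (hMline i) (hMline j) (hMne i j hij)
        ⟨hx.1.2, hx.2⟩ ⟨(hPmem i j hij).1.2, (hPmem i j hij).2⟩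
    · rintro rfl
      exact hPmem i j hij
  have hP3 : ∀ i j k, i ≠ j → i ≠ k → j ≠ k → Pf i j ∉ M k := by
    intro i j k hij hik hjk hmem
    obtain ⟨m3, hm3⟩ : ∃ m3, m0 + 1 = m3 + 3 := by
      have := GCAux.three_le_of_distinct i j k hij hik hjk
      exact ⟨m0 + 1 - 3, by omega⟩
    have hP' : IsPoised (m3 + 3) X := by rw [← hm3]; exact hP
    have hM' : ∀ t, IsMaxLine (m3 + 3) X (M t) := by
      intro t; rw [← hm3]; exact hM t
    exact GCAux.no_three_concurrent hP' (hM' i) (hM' j) (hM' k) (hMne i j hij)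
      (hMne i k hik) (hMne j k hjk)
      ⟨⟨⟨(hPmem i j hij).1.1, (hPmem i j hij).1.2⟩, (hPmem i j hij).2⟩, hmem⟩
  have hPne : ∀ i j k, i ≠ k → j ≠ k → i ≠ j → Pf i k ≠ Pf j k := by
    intro i j k hik hjk hij he
    refine hP3 i k j hik hij (Ne.symm hjk) ?_
    rw [he]
    exact (hPmem j k hjk).1.2
  have hcount := GCAux.union_count hXfin M hMcard Pf (fun i j h => hPuniq i j h) hPne
  -- the single uncovered node O
  have hXU : (X \ ⋃ i, M i).ncard = 1 := by
    have hsub : (⋃ i, (X ∩ M i)) ⊆ X := Set.iUnion_subset (fun i => Set.inter_subset_left)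
    have hdiff : X \ ⋃ i, M i = X \ ⋃ i, (X ∩ M i) := by
      ext x
      simp only [Set.mem_diff, Set.mem_iUnion, Set.mem_inter_iff, not_exists]
      tauto
    have hUfin : (⋃ i, (X ∩ M i)).Finite :=
      Set.finite_iUnion (fun i => hXfin.inter_of_left _)
    rw [hdiff, Set.ncard_diff hsub hUfin, hP.1]
    have hle : (⋃ i, (X ∩ M i)).ncard ≤ X.ncard := Set.ncard_le_ncard hsub hXfin
    rw [hP.1] at hle
    have hN := GCAux.tri_mul_two (m0 + 1)
    have hsq : (m0 + 1 + 1) * (m0 + 1 + 2) = (m0 + 1) * (m0 + 1) + 3 * (m0 + 1) + 2 := by ring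
    rw [hsq] at hN
    generalize hgen : (m0 + 1) * (m0 + 1) = t1 at hcount hN
    omega
  obtain ⟨O, hO⟩ := Set.ncard_eq_one.mp hXU
  have hOX : O ∈ X := by
    have : O ∈ X \ ⋃ i, M i := by rw [hO]; rfl
    exact this.1
  have hOM : ∀ i, O ∉ M i := by
    intro i hmem
    have h1 : O ∈ X \ ⋃ i, M i := by rw [hO]; rfl
    exact h1.2 (Set.mem_iUnion.2 ⟨i, hmem⟩)
  have hOl : O ∉ ℓ := by
    intro hmem
    have h1 : O ∈ Set.range A := by rw [hrange]; exact ⟨hOX, hmem⟩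
    obtain ⟨i, rfl⟩ := h1
    exact hOM i (hAM i)
  -- the extra node B i on each maximal line
  have hBex : ∀ i, ∃ B, (B ∈ X ∧ B ∈ M i) ∧ B ≠ A i ∧ ∀ j, j ≠ i → B ∉ M j := by
    intro i
    set g : Fin (m0 + 1) → Pt := fun j => Pf i j with hg
    set K : Set Pt := insert (A i) (g '' {j | j ≠ i}) with hK
    have hKfin : K.Finite := (Set.toFinite _).image g |>.insert _
    have hKcard : K.ncard ≤ m0 + 1 := by
      refine le_trans (Set.ncard_insert_le _ _) ?_
      have h1 : (g '' {j | j ≠ i}).ncard ≤ m0 := by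
        refine le_trans (Set.ncard_image_le (Set.toFinite _)) ?_
        have hset : {j : Fin (m0 + 1) | j ≠ i} = Set.univ \ {i} := by
          ext x; simp [Set.mem_diff]
        rw [hset, Set.ncard_diff_singleton_of_mem (Set.mem_univ i),
          Set.ncard_univ]
        simp
      omega
    have hnot : ¬(X ∩ M i ⊆ K) := by
      intro hsub
      have h2 := Set.ncard_le_ncard hsub hKfin
      rw [hMcard i] at h2
      omega
    obtain ⟨B, hB1, hB2⟩ := Set.not_subset.mp hnot
    refine ⟨B, ⟨hB1.1, hB1.2⟩, ?_, ?_⟩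
    · intro he
      exact hB2 (by rw [hK, he]; exact Set.mem_insert _ _)
    · intro j hji hmem
      have hx : B ∈ X ∩ M i ∩ M j := ⟨hB1, hmem⟩
      rw [hPuniq i j (Ne.symm hji)] at hx
      refine hB2 ?_
      rw [hK]
      exact Set.mem_insert_of_mem _ ⟨j, hji, hx.symm⟩
  choose Bf hBf using hBex
  have hBX : ∀ i, Bf i ∈ X := fun i => (hBf i).1.1
  have hBM : ∀ i, Bf i ∈ M i := fun i => (hBf i).1.2
  have hBA : ∀ i, Bf i ≠ A i := fun i => (hBf i).2.1
  have hBnot : ∀ i j, j ≠ i → Bf i ∉ M j := fun i j h => (hBf i).2.2 j h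
  have hBl : ∀ i, Bf i ∉ ℓ := by
    intro i hmem
    have h1 : Bf i ∈ Set.range A := by rw [hrange]; exact ⟨hBX i, hmem⟩
    obtain ⟨k, hk⟩ := h1
    by_cases hki : k = i
    · exact hBA i (hk ▸ hki ▸ rfl)
    · exact hBnot i k hki (hk ▸ hAM k)
  have hBO : ∀ i, Bf i ≠ O := fun i he => hOM i (he ▸ hBM i)
  have hBinj : Function.Injective Bf := by
    intro i j he
    by_contra hij
    exact hBnot i j (Ne.symm hij) (he ▸ hBM j)
  have hABne : ∀ i j, A i ≠ Bf j := fun i j he => hBl j (he ▸ hAl i)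
  have hOA : ∀ i, O ≠ A i := fun i he => hOl (he ▸ hAl i)
  have hAinMk : ∀ i k, k ≠ i → A i ∉ M k := fun i k h => hAnotM i k (fun he => h he.symm)
  -- the collinearity relation coming from the GC factorization at the nodes P i j
  have hZP : ∀ i j : Fin (m0 + 1), i ≠ j →
      GCAux.Col O (A i) (Bf j) ∨ GCAux.Col O (A j) (Bf i) ∨ GCAux.Col O (Bf i) (Bf j) := by
    intro i j hij
    have hm0 : 1 ≤ m0 := by
      rcases Nat.eq_zero_or_pos m0 with h0 | h1
      · exfalso
        apply hij
        apply Fin.ext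
        have hi := i.isLt
        have hj := j.isLt
        omega
      · exact h1
    set P := Pf i j with hPdef
    have hPX : P ∈ X := (hPmem i j hij).1.1
    have hPi : P ∈ M i := (hPmem i j hij).1.2
    have hPj : P ∈ M j := (hPmem i j hij).2
    obtain ⟨p, hfund, f, hdeg1, hprod⟩ := hGC P hPX
    set Z : Fin (m0 + 1) → Set Pt := fun t => {x : Pt | eval x (f t) = 0} with hZdef
    have hZline : ∀ t, IsLine (Z t) := fun t => ⟨f t, hdeg1 t, rfl⟩
    have hPnotZ : ∀ t, P ∉ Z t := by
      intro t hmem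
      have h1 : eval P p = 1 := hfund.2.1
      rw [hprod, map_prod] at h1
      rw [Finset.prod_eq_zero (Finset.mem_univ t) (show eval P (f t) = 0 from hmem)] at h1
      exact zero_ne_one h1
    have hvanp : ∀ y, y ∈ X → y ≠ P → ∃ t, y ∈ Z t := by
      intro y hyX hyP
      have h1 : eval y p = 0 := hfund.2.2 y hyX hyP
      rw [hprod, map_prod] at h1
      obtain ⟨t, -, ht⟩ := Finset.prod_eq_zero_iff.mp h1
      exact ⟨t, ht⟩
    have habs : ∀ k, ∃ t, (k ≠ i ∧ k ≠ j) → Z t = M k := by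
      intro k
      by_cases hvk : k ≠ i ∧ k ≠ j
      · have hPk : P ∉ M k := hP3 i j k hij (fun he => hvk.1 he.symm) (fun he => hvk.2 he.symm)
        have hsel : ∀ y : Pt, ∃ t, y ∈ X ∩ M k → y ∈ Z t := by
          intro y
          by_cases hy : y ∈ X ∩ M k
          · obtain ⟨t, ht⟩ := hvanp y hy.1 (fun he => hPk (he ▸ hy.2))
            exact ⟨t, fun _ => ht⟩
          · exact ⟨k, fun h => absurd h hy⟩
        choose tf htf using hsel
        have hkfin : (X ∩ M k).Finite := hXfin.inter_of_left _
        have hfinset : hkfin.toFinset.card = m0 + 2 := by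
          rw [← Set.ncard_eq_toFinset_card _ hkfin, hMcard k]
        obtain ⟨y1, hy1, y2, hy2, hne, heq⟩ :=
          Finset.exists_ne_map_eq_of_card_lt_of_maps_to
            (t := (Finset.univ : Finset (Fin (m0 + 1))))
            (by rw [hfinset, Finset.card_univ, Fintype.card_fin]; omega)
            (fun y _ => Finset.mem_univ (tf y))
        have hy1' : y1 ∈ X ∩ M k := hkfin.mem_toFinset.mp hy1
        have hy2' : y2 ∈ X ∩ M k := hkfin.mem_toFinset.mp hy2
        have hz1 : y1 ∈ Z (tf y1) := htf y1 hy1'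
        have hz2 : y2 ∈ Z (tf y1) := by rw [heq]; exact htf y2 hy2'
        exact ⟨tf y1, fun _ =>
          GCAux.line_unique (hZline (tf y1)) (hMline k) hz1 hz2 hy1'.2 hy2'.2 hne⟩
      · exact ⟨k, fun h => absurd h hvk⟩
    choose tsel htsel using habs
    set V : Finset (Fin (m0 + 1)) := (Finset.univ.erase i).erase j with hV
    have hVmem : ∀ k, k ∈ V → k ≠ i ∧ k ≠ j := by
      intro k hk
      rw [hV, Finset.mem_erase, Finset.mem_erase] at hk
      exact ⟨hk.2.1, hk.1⟩
    have hVcard : V.card = m0 - 1 := by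
      rw [hV, Finset.card_erase_of_mem, Finset.card_erase_of_mem (Finset.mem_univ i),
        Finset.card_univ, Fintype.card_fin]
      · omega
      · exact Finset.mem_erase.mpr ⟨Ne.symm hij, Finset.mem_univ j⟩
    have htinj : Set.InjOn tsel ↑V := by
      intro k1 hk1 k2 hk2 he
      have h1 := htsel k1 (hVmem k1 hk1)
      have h2 := htsel k2 (hVmem k2 hk2)
      rw [he] at h1
      exact hMinj (h1.symm.trans h2)
    set C : Finset (Fin (m0 + 1)) := Finset.univ \ V.image tsel with hC
    have hCcard : C.card = 2 := by
      rw [hC, Finset.card_sdiff_of_subset (Finset.subset_univ _), Finset.card_image_of_injOn htinj,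
        Finset.card_univ, Fintype.card_fin, hVcard]
      omega
    obtain ⟨t1, t2, ht12, hCeq⟩ := Finset.card_eq_two.mp hCcard
    have hfive : ∀ y, y ∈ X → y ≠ P → (∀ k, k ≠ i → k ≠ j → y ∉ M k) → y ∈ Z t1 ∪ Z t2 := by
      intro y hyX hyP hyM
      obtain ⟨t, ht⟩ := hvanp y hyX hyP
      have htC : t ∈ C := by
        rw [hC, Finset.mem_sdiff]
        refine ⟨Finset.mem_univ _, ?_⟩
        intro hmem
        obtain ⟨k, hkV, hkt⟩ := Finset.mem_image.mp hmem
        have hZk : Z (tsel k) = M k := htsel k (hVmem k hkV)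
        rw [hkt] at hZk
        exact hyM k (hVmem k hkV).1 (hVmem k hkV).2 (hZk ▸ ht)
      rw [hCeq] at htC
      rcases Finset.mem_insert.mp htC with rfl | h2
      · exact Or.inl ht
      · rw [Finset.mem_singleton.mp h2] at ht
        exact Or.inr ht
    have hAiP : A i ≠ P := fun he => hAnotM i j hij (he ▸ hPj)
    have hAjP : A j ≠ P := fun he => hAnotM j i (Ne.symm hij) (he ▸ hPi)
    have hBiP : Bf i ≠ P := fun he => hBnot i j (Ne.symm hij) (he ▸ hPj)
    have hBjP : Bf j ≠ P := fun he => hBnot j i hij (he ▸ hPi)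
    have hOP : O ≠ P := fun he => hOM i (he ▸ hPi)
    have hAiZ := hfive (A i) (hAX i) hAiP (fun k hki _ => hAinMk i k hki)
    have hAjZ := hfive (A j) (hAX j) hAjP (fun k _ hkj => hAinMk j k hkj)
    have hBiZ := hfive (Bf i) (hBX i) hBiP (fun k hki _ => hBnot i k hki)
    have hBjZ := hfive (Bf j) (hBX j) hBjP (fun k _ hkj => hBnot j k hkj)
    have hOZ := hfive O hOX hOP (fun k _ _ => hOM k)
    have hforbi : ∀ t, ¬(A i ∈ Z t ∧ Bf i ∈ Z t) := by
      rintro t ⟨h1, h2⟩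
      have he := GCAux.line_unique (hZline t) (hMline i) h1 h2 (hAM i) (hBM i)
        (hABne i i)
      exact hPnotZ t (he ▸ hPi)
    have hforbj : ∀ t, ¬(A j ∈ Z t ∧ Bf j ∈ Z t) := by
      rintro t ⟨h1, h2⟩
      have he := GCAux.line_unique (hZline t) (hMline j) h1 h2 (hAM j) (hBM j)
        (hABne j j)
      exact hPnotZ t (he ▸ hPj)
    have hforbA : ∀ t, A i ∈ Z t → A j ∈ Z t → O ∈ Z t → False := by
      intro t h1 h2 h3
      have he := GCAux.line_unique (hZline t) hℓline h1 h2 (hAl i) (hAl j)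
        (fun he => hij (hAinj he))
      exact hOl (he ▸ h3)
    have key : ∀ ta tb : Fin (m0 + 1),
        A i ∈ Z ta ∪ Z tb → A j ∈ Z ta ∪ Z tb → Bf i ∈ Z ta ∪ Z tb → Bf j ∈ Z ta ∪ Z tb →
        O ∈ Z ta →
        GCAux.Col O (A i) (Bf j) ∨ GCAux.Col O (A j) (Bf i) ∨ GCAux.Col O (Bf i) (Bf j) := by
      intro ta tb hAi' hAj' hBi' hBj' hO'
      rcases hBi' with hBi' | hBi'
      · rcases hBj' with hBj' | hBj'
        · exact Or.inr (Or.inr ⟨Z ta, hZline ta, hO', hBi', hBj'⟩)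
        · rcases hAj' with hAj' | hAj'
          · exact Or.inr (Or.inl ⟨Z ta, hZline ta, hO', hAj', hBi'⟩)
          · exact absurd ⟨hAj', hBj'⟩ (hforbj tb)
      · rcases hBj' with hBj' | hBj'
        · rcases hAi' with hAi' | hAi'
          · exact Or.inl ⟨Z ta, hZline ta, hO', hAi', hBj'⟩
          · exact absurd ⟨hAi', hBi'⟩ (hforbi tb)
        · have hAi'' : A i ∈ Z ta := by
            rcases hAi' with h | h
            · exact h
            · exact absurd ⟨h, hBi'⟩ (hforbi tb)
          have hAj'' : A j ∈ Z ta := by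
            rcases hAj' with h | h
            · exact h
            · exact absurd ⟨h, hBj'⟩ (hforbj tb)
          exact absurd hO' (fun hO'' => hforbA ta hAi'' hAj'' hO'')
    have hswap : ∀ {y : Pt}, y ∈ Z t1 ∪ Z t2 → y ∈ Z t2 ∪ Z t1 := fun h => h.elim Or.inr Or.inl
    rcases hOZ with hO1 | hO2
    · exact key t1 t2 hAiZ hAjZ hBiZ hBjZ hO1
    · exact key t2 t1 (hswap hAiZ) (hswap hAjZ) (hswap hBiZ) (hswap hBjZ) hO2
  -- lines through O
  set aL : Fin (m0 + 1) → Set Pt := fun i => GCAux.affLine O (A i) with haL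
  set bL : Fin (m0 + 1) → Set Pt := fun i => GCAux.affLine O (Bf i) with hbL
  have haLline : ∀ i, IsLine (aL i) := fun i => GCAux.isLine_affLine O (A i) (hOA i)
  have hbLline : ∀ i, IsLine (bL i) := fun i => GCAux.isLine_affLine O (Bf i) (Ne.symm (hBO i))
  have hOaL : ∀ i, O ∈ aL i := fun i => GCAux.mem_affLine_left _ _
  have hAaL : ∀ i, A i ∈ aL i := fun i => GCAux.mem_affLine_right _ _
  have hObL : ∀ i, O ∈ bL i := fun i => GCAux.mem_affLine_left _ _
  have hBbL : ∀ i, Bf i ∈ bL i := fun i => GCAux.mem_affLine_right _ _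
  have huniqa : ∀ i (L : Set Pt), IsLine L → O ∈ L → A i ∈ L → L = aL i :=
    fun i L hL h1 h2 => GCAux.line_eq_affLine hL h1 h2 (hOA i)
  have huniqb : ∀ i (L : Set Pt), IsLine L → O ∈ L → Bf i ∈ L → L = bL i :=
    fun i L hL h1 h2 => GCAux.line_eq_affLine hL h1 h2 (Ne.symm (hBO i))
  have habne : ∀ i, aL i ≠ bL i := by
    intro i he
    have hBin : Bf i ∈ aL i := by rw [he]; exact hBbL i
    have hMi : aL i = M i := GCAux.line_unique (haLline i) (hMline i) (hAaL i) hBin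
      (hAM i) (hBM i) (hABne i i)
    exact hOM i (hMi ▸ hOaL i)
  have haane : ∀ i j, i ≠ j → aL i ≠ aL j := by
    intro i j hij he
    have hAj : A j ∈ aL i := by rw [he]; exact hAaL j
    have hLl : aL i = ℓ := GCAux.line_unique (haLline i) hℓline (hAaL i) hAj
      (hAl i) (hAl j) (fun h => hij (hAinj h))
    exact hOl (hLl ▸ hOaL i)
  have hrel : ∀ i j, i ≠ j → bL i = bL j ∨ aL i = bL j ∨ aL j = bL i := by
    intro i j hij
    rcases hZP i j hij with ⟨L, hL, h1, h2, h3⟩ | ⟨L, hL, h1, h2, h3⟩ | ⟨L, hL, h1, h2, h3⟩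
    · exact Or.inr (Or.inl ((huniqa i L hL h1 h2).symm.trans (huniqb j L hL h1 h3)))
    · exact Or.inr (Or.inr ((huniqa j L hL h1 h2).symm.trans (huniqb i L hL h1 h3)))
    · exact Or.inl ((huniqb i L hL h1 h2).symm.trans (huniqb j L hL h1 h3))
  -- the further maximal line through O
  have hmain : ∃ Lstar, IsLine Lstar ∧ O ∈ Lstar ∧ m0 + 2 ≤ (X ∩ Lstar).ncard := by
    obtain hall | ⟨j0, hj0⟩ := GCAux.comb hn3 aL bL habne haane hrel
    · set i0 : Fin (m0 + 1) := ⟨0, by omega⟩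
      refine ⟨bL i0, hbLline i0, hObL i0, ?_⟩
      have hsub : insert O (Set.range Bf) ⊆ X ∩ bL i0 := by
        intro x hx
        rcases hx with rfl | ⟨k, rfl⟩
        · exact ⟨hOX, hObL i0⟩
        · exact ⟨hBX k, by rw [← hall k i0]; exact hBbL k⟩
      have hcard : (insert O (Set.range Bf)).ncard = m0 + 2 := by
        rw [Set.ncard_insert_of_notMem (by rintro ⟨k, hk⟩; exact hBO k hk)
          (Set.finite_range Bf), ← Set.image_univ, Set.ncard_image_of_injective _ hBinj,
          Set.ncard_univ]
        simp
      rw [← hcard]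
      exact Set.ncard_le_ncard hsub (hXfin.inter_of_left _)
    · refine ⟨aL j0, haLline j0, hOaL j0, ?_⟩
      have hsub : insert O (insert (A j0) (Bf '' {i | i ≠ j0})) ⊆ X ∩ aL j0 := by
        intro x hx
        rcases hx with rfl | hx
        · exact ⟨hOX, hOaL j0⟩
        rcases hx with rfl | ⟨k, hk, rfl⟩
        · exact ⟨hAX j0, hAaL j0⟩
        · exact ⟨hBX k, by rw [← hj0 k hk]; exact hBbL k⟩
      have himcard : (Bf '' {i | i ≠ j0}).ncard = m0 := by
        rw [Set.ncard_image_of_injective _ hBinj]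
        have hset : {i : Fin (m0 + 1) | i ≠ j0} = Set.univ \ {j0} := by
          ext x; simp [Set.mem_diff]
        rw [hset, Set.ncard_diff_singleton_of_mem (Set.mem_univ j0),
          Set.ncard_univ]
        simp
      have hfin2 : (Bf '' {i | i ≠ j0}).Finite := (Set.toFinite _).image _
      have hcard : (insert O (insert (A j0) (Bf '' {i | i ≠ j0}))).ncard = m0 + 2 := by
        have hAnotin : A j0 ∉ Bf '' {i | i ≠ j0} := by
          rintro ⟨k, -, hk⟩
          exact hABne j0 k hk.symm
        have hOnotin : O ∉ insert (A j0) (Bf '' {i | i ≠ j0}) := by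
          intro hmem
          rcases hmem with he | ⟨k, -, hk⟩
          · exact hOA j0 he
          · exact hBO k hk
        rw [Set.ncard_insert_of_notMem hOnotin (hfin2.insert _),
          Set.ncard_insert_of_notMem hAnotin hfin2, himcard]
      rw [← hcard]
      exact Set.ncard_le_ncard hsub (hXfin.inter_of_left _)
  obtain ⟨Lstar, hLline, hLO, hge⟩ := hmain
  have hmax : IsMaxLine (m0 + 1) X Lstar := by
    refine ⟨hLline, le_antisymm (GCAux.line_ncard_le' hn hP hLline) hge⟩
  have hMSfin : {L : Set Pt | IsMaxLine (m0 + 1) X L}.Finite := by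
    refine Set.Finite.subset ((hXfin.prod hXfin).image
      (fun pq : Pt × Pt => GCAux.affLine pq.1 pq.2)) ?_
    intro L hL
    obtain ⟨hLl, hLc⟩ := hL
    obtain ⟨Pp, Qq, hPp, hQq, hne⟩ : ∃ Pp Qq, Pp ∈ X ∩ L ∧ Qq ∈ X ∩ L ∧ Pp ≠ Qq := by
      rw [← Set.one_lt_ncard_iff (hXfin.inter_of_left _)]
      omega
    exact ⟨(Pp, Qq), Set.mem_prod.mpr ⟨hPp.1, hQq.1⟩,
      (GCAux.line_eq_affLine hLl hPp.2 hQq.2 hne).symm⟩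
  have hLnot : Lstar ∉ Set.range M := by
    rintro ⟨i, hi⟩
    exact hOM i (hi ▸ hLO)
  have hsubfin : insert Lstar (Set.range M) ⊆ {L : Set Pt | IsMaxLine (m0 + 1) X L} := by
    intro L hL
    rcases hL with rfl | ⟨i, rfl⟩
    · exact hmax
    · exact hM i
  have hcard2 : (insert Lstar (Set.range M)).ncard = m0 + 2 := by
    rw [Set.ncard_insert_of_notMem hLnot (Set.finite_range M), ← Set.image_univ,
      Set.ncard_image_of_injective _ hMinj, Set.ncard_univ]
    simp
  have hfinal := Set.ncard_le_ncard hsubfin hMSfin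
  rw [hcard2] at hfinal
  omega
end

section
/- Let X be an n-poised set and let ℓ be an n-node line of X. Suppose there exist two maximal lines M′, M″ of X whose intersection point is a node of X lying on ℓ. Then for every maximal line M of X with M ≠ M′ and M ≠ M″, the number of nodes of M that use ℓ equals n − 2, i.e., |M ∩ X_ℓ| = n − 2. -/
open MvPolynomial

namespace Aux

lemma fin2 (i : Fin 2) : i = 0 ∨ i = 1 := by fin_cases i <;> simp

lemma monom_cases {m : Fin 2 →₀ ℕ} (h : (m.sum fun _ e => e) ≤ 1) :
    m = 0 ∨ m = Finsupp.single 0 1 ∨ m = Finsupp.single 1 1 := by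
  have hs : (m.sum fun _ e => e) = m 0 + m 1 := by
    rw [Finsupp.sum_fintype _ _ (fun _ => rfl), Fin.sum_univ_two]
  rw [hs] at h
  have hext : ∀ (k l : ℕ), m 0 = k → m 1 = l →
      ∀ m' : Fin 2 →₀ ℕ, m' 0 = k → m' 1 = l → m = m' := by
    intro k l h0 h1 m' h0' h1'
    ext i
    rcases fin2 i with rfl | rfl <;> simp_all
  rcases Nat.lt_or_ge (m 0) 1 with h0 | h0
  · rcases Nat.lt_or_ge (m 1) 1 with h1 | h1
    · left
      exact hext 0 0 (by omega) (by omega) 0 (by simp) (by simp)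
    · right; right
      exact hext 0 1 (by omega) (by omega) _ (by simp) (by simp)
  · right; left
    exact hext 1 0 (by omega) (by omega) _ (by simp) (by simp)

lemma eq_linear_of_totalDegree_le_one {p : BPoly} (h : p.totalDegree ≤ 1) :
    p = C (coeff 0 p) + C (coeff (Finsupp.single 0 1) p) * X 0
        + C (coeff (Finsupp.single 1 1) p) * X 1 := by
  classical
  have hsub : p.support ⊆ {0, Finsupp.single 0 1, Finsupp.single 1 1} := by
    intro m hm
    have := (le_totalDegree hm).trans h
    rcases monom_cases this with rfl | rfl | rfl <;> simp
  have h01 : (Finsupp.single 0 1 : Fin 2 →₀ ℕ) ≠ Finsupp.single 1 1 := by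
    intro hh
    have := DFunLike.congr_fun hh 0
    simp at this
  have h00 : (0 : Fin 2 →₀ ℕ) ≠ Finsupp.single 0 1 := by
    intro hh
    have := DFunLike.congr_fun hh 0
    simp at this
  have h10 : (0 : Fin 2 →₀ ℕ) ≠ Finsupp.single 1 1 := by
    intro hh
    have := DFunLike.congr_fun hh 1
    simp at this
  calc p = ∑ m ∈ p.support, monomial m (coeff m p) := p.as_sum
    _ = ∑ m ∈ ({0, Finsupp.single 0 1, Finsupp.single 1 1} : Finset (Fin 2 →₀ ℕ)),
          monomial m (coeff m p) := by
        refine Finset.sum_subset hsub ?_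
        intro m _ hm
        rw [notMem_support_iff.mp hm, map_zero]
    _ = _ := by
        rw [Finset.sum_insert (by simp [h00, h10]), Finset.sum_insert (by simp [h01]),
          Finset.sum_singleton]
        simp only [monomial_eq, Finsupp.prod_single_index, pow_one, pow_zero]
        rw [C_apply]
        simp [monomial_eq]
        ring

lemma eval_linear (a b c : ℝ) (x : Pt) :
    eval x (C c + C a * X 0 + C b * X 1 : BPoly) = c + a * x 0 + b * x 1 := by simp

lemma linear_totalDegree_le (a b c : ℝ) :
    (C c + C a * X 0 + C b * X 1 : BPoly).totalDegree ≤ 1 := by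
  refine (totalDegree_add _ _).trans ?_
  simp only [max_le_iff]
  constructor
  · refine (totalDegree_add _ _).trans ?_
    simp only [max_le_iff]
    refine ⟨by simp, ?_⟩
    refine (totalDegree_mul _ _).trans ?_
    simp [totalDegree_X]
  · refine (totalDegree_mul _ _).trans ?_
    simp [totalDegree_X]

lemma exists_abc {f : BPoly} (hf : f.totalDegree = 1) :
    ∃ a b c : ℝ, f = C c + C a * X 0 + C b * X 1 ∧ (a ≠ 0 ∨ b ≠ 0) := by
  refine ⟨coeff (Finsupp.single 0 1) f, coeff (Finsupp.single 1 1) f, coeff 0 f,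
    eq_linear_of_totalDegree_le_one hf.le, ?_⟩
  by_contra hab
  push_neg at hab
  obtain ⟨h0, h1⟩ := hab
  have := eq_linear_of_totalDegree_le_one hf.le
  rw [h0, h1] at this
  simp only [map_zero, zero_mul, add_zero] at this
  rw [this, totalDegree_C] at hf
  exact absurd hf (by simp)


/-- Parametrization of the line `{x | c + a x₀ + b x₁ = 0}`. -/
lemma param {a b c : ℝ} (hab : a ≠ 0 ∨ b ≠ 0) :
    ∃ P0 v : Pt, v ≠ 0 ∧
      (∀ x : Pt, c + a * x 0 + b * x 1 = 0 ↔ ∃ t : ℝ, x = fun i => P0 i + t * v i) := by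
  have hv : (![-b, a] : Pt) ≠ 0 := by
    intro hz
    have h0 := congrFun hz 0
    have h1 := congrFun hz 1
    simp at h0 h1
    rcases hab with h | h <;> simp_all
  by_cases ha : a ≠ 0
  · refine ⟨![-c/a, 0], ![-b, a], hv, fun x => ⟨fun hx => ?_, fun ⟨t, ht⟩ => ?_⟩⟩
    · refine ⟨x 1 / a, funext fun i => ?_⟩
      rcases fin2 i with rfl | rfl
      · simp only [Matrix.cons_val_zero]
        field_simp
        linear_combination hx
      · simp only [Matrix.cons_val_one, Matrix.head_cons, Matrix.cons_val_zero]
        field_simp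
        ring
    · have h0 := congrFun ht 0
      have h1 := congrFun ht 1
      simp only [Matrix.cons_val_zero, Matrix.cons_val_one, Matrix.head_cons] at h0 h1
      rw [h0, h1]
      field_simp
      ring
  · push_neg at ha
    subst ha
    have hb : b ≠ 0 := by tauto
    refine ⟨![0, -c/b], ![-b, 0], by simpa using hv, fun x => ⟨fun hx => ?_, fun ⟨t, ht⟩ => ?_⟩⟩
    · refine ⟨-(x 0) / b, funext fun i => ?_⟩
      rcases fin2 i with rfl | rfl
      · simp only [Matrix.cons_val_zero]
        field_simp
        ring
      · simp only [Matrix.cons_val_one, Matrix.head_cons, Matrix.cons_val_zero]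
        field_simp
        linarith [hx]
    · have h1 := congrFun ht 1
      simp only [Matrix.cons_val_one, Matrix.head_cons, Matrix.cons_val_zero] at h1
      rw [h1]
      field_simp
      ring

/-- Restriction of a bivariate polynomial to a parametrized line. -/
noncomputable def lc (p : BPoly) (P0 v : Pt) : Polynomial ℝ :=
  aeval (fun i => Polynomial.C (P0 i) + Polynomial.C (v i) * Polynomial.X) p

lemma lc_eval (p : BPoly) (P0 v : Pt) (t : ℝ) :
    (lc p P0 v).eval t = eval (fun i => P0 i + t * v i) p := by
  unfold lc
  rw [aeval_def]
  have h := eval₂_comp_left (Polynomial.evalRingHom t) (algebraMap ℝ (Polynomial ℝ))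
      (fun i => Polynomial.C (P0 i) + Polynomial.C (v i) * Polynomial.X) p
  simp only [Polynomial.coe_evalRingHom] at h
  rw [h]
  have hc : (Polynomial.evalRingHom t).comp (algebraMap ℝ (Polynomial ℝ)) = RingHom.id ℝ := by
    ext r; simp
  have hg : (Polynomial.eval t ∘ fun i =>
      Polynomial.C (P0 i) + Polynomial.C (v i) * Polynomial.X) = fun i => P0 i + t * v i := by
    funext i
    simp
    ring
  rw [hc, hg]
  rfl

lemma lc_natDegree_le (p : BPoly) (P0 v : Pt) :
    (lc p P0 v).natDegree ≤ p.totalDegree := by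
  classical
  conv_lhs => rw [p.as_sum]
  unfold lc
  rw [map_sum]
  refine Polynomial.natDegree_sum_le_of_forall_le _ _ fun m hm => ?_
  rw [aeval_monomial]
  refine (Polynomial.natDegree_mul_le).trans ?_
  have h1 : (Finsupp.prod m fun i k =>
      (Polynomial.C (P0 i) + Polynomial.C (v i) * Polynomial.X) ^ k).natDegree
      ≤ m.sum fun _ e => e := by
    rw [Finsupp.prod]
    refine (Polynomial.natDegree_prod_le _ _).trans ?_
    rw [Finsupp.sum]
    refine Finset.sum_le_sum fun i _ => ?_
    refine (Polynomial.natDegree_pow_le).trans ?_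
    have : (Polynomial.C (P0 i) + Polynomial.C (v i) * Polynomial.X).natDegree ≤ 1 := by
      refine (Polynomial.natDegree_add_le _ _).trans ?_
      simp only [Polynomial.natDegree_C, max_le_iff]
      exact ⟨Nat.zero_le _, (Polynomial.natDegree_mul_le).trans (by simp)⟩
    calc m i * (Polynomial.C (P0 i) + Polynomial.C (v i) * Polynomial.X).natDegree
        ≤ m i * 1 := Nat.mul_le_mul_left _ this
      _ = m i := mul_one _
  calc (algebraMap ℝ (Polynomial ℝ) (coeff m p)).natDegree
        + (Finsupp.prod m fun i k =>
            (Polynomial.C (P0 i) + Polynomial.C (v i) * Polynomial.X) ^ k).natDegree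
      ≤ 0 + (m.sum fun _ e => e) := by
        refine Nat.add_le_add ?_ h1
        simp [Algebra.algebraMap_self]
    _ ≤ p.totalDegree := by
        rw [Nat.zero_add]
        exact le_totalDegree hm


lemma vanish_on_line {f p : BPoly} (hf : f.totalDegree = 1) {S : Set Pt} (hfin : S.Finite)
    (hsub : ∀ x ∈ S, eval x f = 0) (hvan : ∀ x ∈ S, eval x p = 0)
    (hdeg : p.totalDegree < S.ncard) :
    ∀ x : Pt, eval x f = 0 → eval x p = 0 := by
  classical
  obtain ⟨a, b, c, hfe0, hab⟩ := exists_abc hf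
  obtain ⟨P0, v, hv, hp⟩ := param (c := c) hab
  have hfe : ∀ x : Pt, eval x f = 0 ↔ ∃ t : ℝ, x = fun i => P0 i + t * v i := by
    intro x
    rw [hfe0, eval_linear]
    exact hp x
  have hex : ∀ x ∈ S, ∃ t : ℝ, x = fun i => P0 i + t * v i := fun x hx => (hfe x).1 (hsub x hx)
  choose! τ hτ using hex
  have hq : lc p P0 v = 0 := by
    apply Polynomial.eq_zero_of_natDegree_lt_card_of_eval_eq_zero' _ (hfin.toFinset.image τ)
    · intro i hi
      simp only [Finset.mem_image, Set.Finite.mem_toFinset] at hi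
      obtain ⟨x, hx, rfl⟩ := hi
      rw [lc_eval, ← hτ x hx]
      exact hvan x hx
    · have hcard : (hfin.toFinset.image τ).card = S.ncard := by
        rw [Finset.card_image_of_injOn, Set.ncard_eq_toFinset_card _ hfin]
        intro x hx y hy hxy
        simp only [Finset.mem_coe, Set.Finite.mem_toFinset] at hx hy
        rw [hτ x hx, hτ y hy, hxy]
      rw [hcard]
      exact lt_of_le_of_lt (lc_natDegree_le _ _ _) hdeg
  intro x hx0
  obtain ⟨t, rfl⟩ := (hfe x).1 hx0
  rw [← lc_eval, hq]
  simp

lemma fse_C (r : ℝ) : finSuccEquiv ℝ 1 (C r : BPoly) = Polynomial.C (C r) := by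
  simp [finSuccEquiv_apply]

lemma dvd_core {a b c : ℝ} (ha : a ≠ 0) {p : BPoly}
    (h : ∀ x : Pt, c + a * x 0 + b * x 1 = 0 → eval x p = 0) :
    (C c + C a * X 0 + C b * X 1 : BPoly) ∣ p := by
  set h' : MvPolynomial (Fin 1) ℝ := C (-(c/a)) + C (-(b/a)) * X 0 with hh'
  have h1 : (1 : Fin 2) = Fin.succ 0 := rfl
  have hef : finSuccEquiv ℝ 1 (C c + C a * X 0 + C b * X 1 : BPoly)
      = Polynomial.C (C a) * (Polynomial.X - Polynomial.C h') := by
    rw [map_add, map_add, map_mul, map_mul, finSuccEquiv_X_zero, h1, finSuccEquiv_X_succ,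
      fse_C, fse_C, fse_C, hh']
    have e1 : a * -(c/a) = -c := by field_simp; try ring
    have e2 : a * -(b/a) = -b := by field_simp; try ring
    have hinner : (C a : MvPolynomial (Fin 1) ℝ) * h' = C (-c) + C (-b) * X 0 := by
      rw [hh', mul_add, ← C_mul, e1, ← mul_assoc, ← C_mul, e2]
    rw [mul_sub, ← Polynomial.C_mul (a := (C a : MvPolynomial (Fin 1) ℝ)), hinner]
    simp only [map_add, map_neg, map_mul]
    ring
  have hroot : Polynomial.eval h' (finSuccEquiv ℝ 1 p) = 0 := by
    refine MvPolynomial.funext fun y => ?_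
    have step1 : eval y (Polynomial.eval h' (finSuccEquiv ℝ 1 p))
        = Polynomial.eval (eval y h') (Polynomial.map (eval y) (finSuccEquiv ℝ 1 p)) := by
      rw [← Polynomial.eval₂_eq_eval_map]
      exact (Polynomial.eval₂_hom (eval y) h').symm
    rw [step1, map_zero, ← eval_eq_eval_mv_eval']
    apply h
    have hz : eval y h' = -(c/a) + -(b/a) * y 0 := by simp [hh']
    have hc0 : (Fin.cons (eval y h') y : Pt) 0 = eval y h' := rfl
    have hc1 : (Fin.cons (eval y h') y : Pt) 1 = y 0 := by
      rw [h1]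
      exact Fin.cons_succ _ _ _
    rw [hc0, hc1, hz]
    field_simp
    ring
  have hdvd1 : (Polynomial.X - Polynomial.C h') ∣ finSuccEquiv ℝ 1 p :=
    Polynomial.dvd_iff_isRoot.mpr hroot
  have hu : IsUnit (Polynomial.C (C a : MvPolynomial (Fin 1) ℝ)) :=
    ((isUnit_iff_ne_zero.mpr ha).map C).map Polynomial.C
  have hdvd2 : finSuccEquiv ℝ 1 (C c + C a * X 0 + C b * X 1 : BPoly) ∣ finSuccEquiv ℝ 1 p := by
    rw [hef]
    obtain ⟨w, hw⟩ := hdvd1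
    refine ⟨↑hu.unit⁻¹ * w, ?_⟩
    have hone : (Polynomial.C (C a : MvPolynomial (Fin 1) ℝ)) * ↑hu.unit⁻¹ = 1 :=
      hu.mul_val_inv
    calc finSuccEquiv ℝ 1 p = (Polynomial.X - Polynomial.C h') * w := hw
      _ = (Polynomial.C (C a) * ↑hu.unit⁻¹) * ((Polynomial.X - Polynomial.C h') * w) := by
          rw [hone, one_mul]
      _ = _ := by ring
  have := map_dvd (finSuccEquiv ℝ 1).symm hdvd2
  simpa using this

lemma dvd_of_vanish {f : BPoly} (hf : f.totalDegree = 1) {p : BPoly}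
    (h : ∀ x : Pt, eval x f = 0 → eval x p = 0) : f ∣ p := by
  obtain ⟨a, b, c, hfe0, hab⟩ := exists_abc hf
  by_cases ha : a ≠ 0
  · rw [hfe0]
    apply dvd_core ha
    intro x hx
    apply h
    rw [hfe0, eval_linear, hx]
  · push_neg at ha
    subst ha
    have hb : b ≠ 0 := by tauto
    set s : Fin 2 ≃ Fin 2 := Equiv.swap 0 1 with hs
    have hsf : rename (⇑s) f = (C c + C b * X 0 + C (0:ℝ) * X 1 : BPoly) := by
      rw [hfe0]
      simp only [map_add, map_mul, rename_C, rename_X]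
      have h0 : s 0 = 1 := Equiv.swap_apply_left 0 1
      have h1 : s 1 = 0 := Equiv.swap_apply_right 0 1
      rw [h0, h1]
      ring
    have key : (C c + C b * X 0 + C (0:ℝ) * X 1 : BPoly) ∣ rename (⇑s) p := by
      apply dvd_core hb
      intro x hx
      rw [eval_rename]
      apply h
      rw [hfe0, eval_linear]
      simp only [Function.comp_apply]
      have h0 : s 0 = 1 := Equiv.swap_apply_left 0 1
      have h1 : s 1 = 0 := Equiv.swap_apply_right 0 1
      rw [h0, h1]
      linarith [hx]
    rw [← hsf] at key
    have key2 := map_dvd (rename (⇑s) : BPoly →ₐ[ℝ] BPoly) key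
    have hss : ∀ q : BPoly, rename (⇑s) (rename (⇑s) q) = q := by
      intro q
      rw [rename_rename]
      have : (⇑s ∘ ⇑s) = id := by
        funext i
        simp [hs, Equiv.swap_apply_self]
      rw [this, rename_id, AlgHom.id_apply]
    rw [hss, hss] at key2
    exact key2


lemma totalDegree_X0_mul {r : BPoly} (hr : r ≠ 0) :
    (X 0 * r).totalDegree = r.totalDegree + 1 := by
  apply le_antisymm
  · have h := totalDegree_mul (X 0 : BPoly) r
    rw [totalDegree_X] at h
    omega
  · have hne : r.support.Nonempty := by
      rw [Finset.nonempty_iff_ne_empty]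
      intro h0
      exact hr (support_eq_empty.mp h0)
    obtain ⟨m, hm, hsup⟩ := Finset.exists_mem_eq_sup r.support hne (fun m => m.sum fun _ e => e)
    have hmem : Finsupp.single 0 1 + m ∈ (X 0 * r).support := by
      rw [mem_support_iff, coeff_X_mul]
      exact mem_support_iff.mp hm
    have hle := le_totalDegree hmem
    have hsum : ((Finsupp.single 0 1 + m : Fin 2 →₀ ℕ).sum fun _ e => e)
        = 1 + (m.sum fun _ e => e) := by
      rw [Finsupp.sum_add_index' (fun _ => rfl) (fun _ _ _ => rfl),
        Finsupp.sum_single_index rfl]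
    rw [hsum] at hle
    rw [totalDegree, hsup]
    omega

lemma totalDegree_aeval_le (g : Fin 2 → BPoly) (hg : ∀ i, (g i).totalDegree ≤ 1)
    (p : BPoly) : (aeval g p).totalDegree ≤ p.totalDegree := by
  classical
  conv_lhs => rw [p.as_sum]
  rw [map_sum]
  refine (totalDegree_finset_sum _ _).trans ?_
  refine Finset.sup_le fun m hm => ?_
  rw [aeval_monomial]
  refine (totalDegree_mul _ _).trans ?_
  have h0 : (algebraMap ℝ BPoly (coeff m p)).totalDegree = 0 := by
    rw [algebraMap_eq, totalDegree_C]
  rw [h0, Nat.zero_add]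
  have h1 : (Finsupp.prod m fun i k => g i ^ k).totalDegree ≤ m.sum fun _ e => e := by
    rw [Finsupp.prod, Finsupp.sum]
    refine (totalDegree_finset_prod _ _).trans ?_
    refine Finset.sum_le_sum fun i _ => ?_
    refine (totalDegree_pow _ _).trans ?_
    calc m i * (g i).totalDegree ≤ m i * 1 := Nat.mul_le_mul_left _ (hg i)
      _ = m i := mul_one _
  exact h1.trans (le_totalDegree hm)

lemma totalDegree_linear_mul_core {a b c : ℝ} (ha : a ≠ 0) {q : BPoly} (hq : q ≠ 0) :
    ((C c + C a * X 0 + C b * X 1) * q).totalDegree = q.totalDegree + 1 := by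
  classical
  set g1 : Fin 2 → BPoly := ![C c + C a * X 0 + C b * X 1, X 1] with hg1
  set g2 : Fin 2 → BPoly := ![C a⁻¹ * (X 0 - C c - C b * X 1), X 1] with hg2
  have hb1 : ∀ i, (g1 i).totalDegree ≤ 1 := by
    intro i
    rcases fin2 i with rfl | rfl
    · simpa [hg1] using linear_totalDegree_le a b c
    · simp [hg1, totalDegree_X]
  have hb2 : ∀ i, (g2 i).totalDegree ≤ 1 := by
    intro i
    rcases fin2 i with rfl | rfl
    · simp only [hg2, Matrix.cons_val_zero]
      refine (totalDegree_mul _ _).trans ?_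
      rw [totalDegree_C, Nat.zero_add]
      refine (totalDegree_sub _ _).trans ?_
      simp only [max_le_iff]
      refine ⟨(totalDegree_sub _ _).trans ?_, ?_⟩
      · simp [totalDegree_X, totalDegree_C]
      · refine (totalDegree_mul _ _).trans ?_
        simp [totalDegree_X, totalDegree_C]
    · simp [hg2, totalDegree_X]
  have hCaa : (C a⁻¹ : BPoly) * C a = 1 := by
    rw [← C_mul, inv_mul_cancel₀ ha, C_1]
  have hCaa' : (C a : BPoly) * C a⁻¹ = 1 := by
    rw [← C_mul, mul_inv_cancel₀ ha, C_1]
  have hswap : aeval g2 (C c + C a * X 0 + C b * X 1 : BPoly) = X 0 := by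
    simp only [map_add, map_mul, aeval_C, aeval_X, hg2, Matrix.cons_val_zero,
      Matrix.cons_val_one, Matrix.head_cons, algebraMap_eq]
    calc (C c + C a * (C a⁻¹ * (X 0 - C c - C b * X 1)) + C b * X 1 : BPoly)
        = (C a * C a⁻¹) * (X 0 - C c - C b * X 1) + C c + C b * X 1 := by ring
      _ = X 0 := by rw [hCaa']; ring
  have hId1 : ∀ p : BPoly, aeval g1 (aeval g2 p) = p := by
    intro p
    have hcomp : (aeval g1).comp (aeval g2) = AlgHom.id ℝ BPoly := by
      apply MvPolynomial.algHom_ext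
      intro i
      rcases fin2 i with rfl | rfl
      · simp only [AlgHom.comp_apply, AlgHom.id_apply, aeval_X, hg2, Matrix.cons_val_zero]
        simp only [map_mul, map_sub, aeval_C, aeval_X, hg1, Matrix.cons_val_zero,
          Matrix.cons_val_one, Matrix.head_cons, algebraMap_eq]
        calc (C a⁻¹ : BPoly) * (C c + C a * X 0 + C b * X 1 - C c - C b * X 1)
            = (C a⁻¹ * C a) * X 0 := by ring
          _ = X 0 := by rw [hCaa]; ring
      · simp [hg1, hg2]
    calc aeval g1 (aeval g2 p) = ((aeval g1).comp (aeval g2)) p := rfl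
      _ = p := by rw [hcomp]; rfl
  set r := aeval g2 q with hrdef
  have hr : aeval g1 r = q := hId1 q
  have hrne : r ≠ 0 := fun h0 => hq (by rw [← hr, h0, map_zero])
  have hfq : aeval g2 ((C c + C a * X 0 + C b * X 1) * q) = X 0 * r := by
    rw [map_mul, hswap]
  apply le_antisymm
  · have h := totalDegree_mul (C c + C a * X 0 + C b * X 1 : BPoly) q
    have h2 := linear_totalDegree_le a b c
    omega
  · have h1 : (X 0 * r).totalDegree ≤ ((C c + C a * X 0 + C b * X 1) * q).totalDegree := by
      rw [← hfq]
      exact totalDegree_aeval_le g2 hb2 _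
    have h2 : (X 0 * r).totalDegree = r.totalDegree + 1 := totalDegree_X0_mul hrne
    have h3 : q.totalDegree ≤ r.totalDegree := by
      conv_lhs => rw [← hr]
      exact totalDegree_aeval_le g1 hb1 r
    omega

lemma td_rename_swap (p : BPoly) :
    (rename (⇑(Equiv.swap (0 : Fin 2) 1)) p).totalDegree = p.totalDegree := by
  set s : Fin 2 ≃ Fin 2 := Equiv.swap 0 1 with hs
  have hss : ∀ q : BPoly, rename (⇑s) (rename (⇑s) q) = q := by
    intro q
    rw [rename_rename]
    have : (⇑s ∘ ⇑s) = id := by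
      funext i
      simp [hs, Equiv.swap_apply_self]
    rw [this, rename_id, AlgHom.id_apply]
  apply le_antisymm (totalDegree_rename_le _ _)
  conv_lhs => rw [← hss p]
  exact totalDegree_rename_le _ _

lemma totalDegree_linear_mul {f q : BPoly} (hf : f.totalDegree = 1) (hq : q ≠ 0) :
    (f * q).totalDegree = q.totalDegree + 1 := by
  obtain ⟨a, b, c, hfe0, hab⟩ := exists_abc hf
  by_cases ha : a ≠ 0
  · rw [hfe0]
    exact totalDegree_linear_mul_core ha hq
  · push_neg at ha
    subst ha
    have hb : b ≠ 0 := by tauto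
    set s : Fin 2 ≃ Fin 2 := Equiv.swap 0 1 with hs
    have h0 : s 0 = 1 := Equiv.swap_apply_left 0 1
    have h1 : s 1 = 0 := Equiv.swap_apply_right 0 1
    have hsf : rename (⇑s) f = (C c + C b * X 0 + C (0:ℝ) * X 1 : BPoly) := by
      rw [hfe0]
      simp only [map_add, map_mul, rename_C, rename_X]
      rw [h0, h1]
      ring
    have hqne : rename (⇑s) q ≠ 0 := by
      intro h0'
      apply hq
      have := congrArg (rename (⇑s)) h0'
      rw [rename_rename] at this
      have hid : (⇑s ∘ ⇑s) = id := by
        funext i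
        simp [hs, Equiv.swap_apply_self]
      rw [hid, rename_id, map_zero] at this
      exact this
    have := totalDegree_linear_mul_core (a := b) (b := (0:ℝ)) (c := c) hb hqne
    rw [← hsf, ← map_mul] at this
    rw [← td_rename_swap (f * q), ← td_rename_swap q]
    exact this

lemma line_param {L : Set Pt} (hL : IsLine L) :
    ∃ P0 v : Pt, v ≠ 0 ∧ ∀ x : Pt, x ∈ L ↔ ∃ t : ℝ, x = fun i => P0 i + t * v i := by
  obtain ⟨f, hf, rfl⟩ := hL
  obtain ⟨a, b, c, hfe0, hab⟩ := exists_abc hf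
  obtain ⟨P0, v, hv, hp⟩ := param (c := c) hab
  refine ⟨P0, v, hv, fun x => ?_⟩
  rw [Set.mem_setOf_eq, hfe0, eval_linear]
  exact hp x

lemma line_eq_of_two {L1 L2 : Set Pt} (h1 : IsLine L1) (h2 : IsLine L2) {x y : Pt}
    (hx1 : x ∈ L1) (hy1 : y ∈ L1) (hx2 : x ∈ L2) (hy2 : y ∈ L2) (hxy : x ≠ y) :
    L1 = L2 := by
  suffices key : ∀ L : Set Pt, IsLine L → x ∈ L → y ∈ L →
      L = {z : Pt | ∃ s : ℝ, z = fun i => x i + s * (y i - x i)} by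
    rw [key L1 h1 hx1 hy1, key L2 h2 hx2 hy2]
  intro L hL hx hy
  obtain ⟨P0, v, hv, hmem⟩ := line_param hL
  obtain ⟨t1, ht1⟩ := (hmem x).1 hx
  obtain ⟨t2, ht2⟩ := (hmem y).1 hy
  have ht12 : t2 - t1 ≠ 0 := by
    intro h0
    have : t1 = t2 := by linarith [sub_eq_zero.mp h0]
    exact hxy (by rw [ht1, ht2, this])
  ext z
  simp only [Set.mem_setOf_eq]
  constructor
  · intro hz
    obtain ⟨t, htz⟩ := (hmem z).1 hz
    refine ⟨(t - t1)/(t2 - t1), ?_⟩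
    rw [htz]
    funext i
    have e1 := congrFun ht1 i
    have e2 := congrFun ht2 i
    rw [e1, e2]
    field_simp
    ring
  · rintro ⟨s, rfl⟩
    apply (hmem _).2
    refine ⟨t1 + s * (t2 - t1), ?_⟩
    funext i
    have e1 := congrFun ht1 i
    have e2 := congrFun ht2 i
    rw [e1, e2]
    ring


lemma poised_finite {n : ℕ} {Xs : Set Pt} (hX : IsPoised n Xs) : Xs.Finite := by
  by_contra hinf
  have h0 : Xs.ncard = 0 := Set.Infinite.ncard hinf
  rw [hX.1] at h0
  have h2 : 2 ≤ (n + 1) * (n + 2) := by nlinarith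
  have h3 := Nat.div_pos h2 (by norm_num)
  omega

lemma exists_fund {n : ℕ} {Xs : Set Pt} (hX : IsPoised n Xs) {A : Pt} (hA : A ∈ Xs) :
    ∃ p : BPoly, IsFund n Xs A p := by
  obtain ⟨p, ⟨hdeg, hval⟩, -⟩ := hX.2 (fun B => if B = A then 1 else 0)
  refine ⟨p, hdeg, by simpa using hval A hA, fun B hB hBA => by simpa [hBA] using hval B hB⟩

lemma fund_ne_zero {n : ℕ} {Xs : Set Pt} {A : Pt} {p : BPoly} (hp : IsFund n Xs A p) :
    p ≠ 0 := by
  intro h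
  have := hp.2.1
  rw [h, map_zero] at this
  exact zero_ne_one this

lemma mem_line_iff {M : Set Pt} {f : BPoly} (hMf : M = {x : Pt | eval x f = 0}) (x : Pt) :
    x ∈ M ↔ eval x f = 0 := by rw [hMf]; exact Iff.rfl

lemma maxline_dvd {n : ℕ} {Xs M : Set Pt} (hfin : Xs.Finite) (hM : IsMaxLine n Xs M)
    {A : Pt} (hAM : A ∉ M) {p : BPoly} (hp : IsFund n Xs A p)
    {f : BPoly} (hf : f.totalDegree = 1) (hMf : M = {x : Pt | eval x f = 0}) : f ∣ p := by
  apply dvd_of_vanish hf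
  refine vanish_on_line hf (S := Xs ∩ M) (hfin.inter_of_left M) ?_ ?_ ?_
  · intro x hx
    exact (mem_line_iff hMf x).mp hx.2
  · intro x hx
    exact hp.2.2 x hx.1 (fun h => hAM (h ▸ hx.2))
  · rw [hM.2]
    have := hp.1
    omega

lemma peel {f p : BPoly} (hf : f.totalDegree = 1) (hp : p ≠ 0) (hdvd : f ∣ p) :
    ∃ q : BPoly, p = f * q ∧ q ≠ 0 ∧ q.totalDegree + 1 = p.totalDegree := by
  obtain ⟨q, rfl⟩ := hdvd
  have hq : q ≠ 0 := fun h => hp (by rw [h, mul_zero])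
  exact ⟨q, rfl, hq, (totalDegree_linear_mul hf hq).symm⟩

lemma dvd_of_roots {f q : BPoly} (hf : f.totalDegree = 1) {S : Set Pt} (hfin : S.Finite)
    (hsub : ∀ x ∈ S, eval x f = 0) (hvan : ∀ x ∈ S, eval x q = 0)
    (hdeg : q.totalDegree < S.ncard) : f ∣ q :=
  dvd_of_vanish hf (vanish_on_line hf hfin hsub hvan hdeg)

lemma inter_unique {L1 L2 : Set Pt} (h1 : IsLine L1) (h2 : IsLine L2) (hne : L1 ≠ L2)
    {x y : Pt} (hx1 : x ∈ L1) (hx2 : x ∈ L2) (hy1 : y ∈ L1) (hy2 : y ∈ L2) : x = y := by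
  by_contra hxy
  exact hne (line_eq_of_two h1 h2 hx1 hy1 hx2 hy2 hxy)

lemma lines_meet {n : ℕ} {Xs M1 M2 : Set Pt} (hX : IsPoised n Xs)
    (hM1 : IsMaxLine n Xs M1) (hM2 : IsMaxLine n Xs M2) :
    ∃ B : Pt, B ∈ Xs ∧ B ∈ M1 ∧ B ∈ M2 := by
  by_contra hno
  push_neg at hno
  have hfin := poised_finite hX
  obtain ⟨f1, hf1, hM1f⟩ := hM1.1
  obtain ⟨f2, hf2, hM2f⟩ := hM2.1
  have hne2 : (Xs ∩ M2).Nonempty := by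
    apply Set.nonempty_of_ncard_ne_zero
    rw [hM2.2]
    omega
  obtain ⟨B, hBX, hBM2⟩ := hne2
  have hBM1 : B ∉ M1 := fun h => hno B hBX h hBM2
  obtain ⟨p, hp⟩ := exists_fund hX hBX
  have hdvd := maxline_dvd hfin hM1 hBM1 hp hf1 hM1f
  obtain ⟨q, hpq, hqne, hqdeg⟩ := peel hf1 (fund_ne_zero hp) hdvd
  have hvan : ∀ x ∈ (Xs ∩ M2) \ {B}, eval x q = 0 := by
    intro x hx
    have hx1 : eval x p = 0 := hp.2.2 x hx.1.1 (by simpa using hx.2)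
    have hxf1 : eval x f1 ≠ 0 := fun h0 => hno x hx.1.1 ((mem_line_iff hM1f x).mpr h0) hx.1.2
    rw [hpq, map_mul] at hx1
    rcases mul_eq_zero.mp hx1 with h | h
    · exact absurd h hxf1
    · exact h
  have hcard : ((Xs ∩ M2) \ {B}).ncard = n := by
    rw [Set.ncard_diff_singleton_of_mem (Set.mem_inter hBX hBM2), hM2.2]
    omega
  have hvan2 := vanish_on_line hf2 ((hfin.inter_of_left M2).diff (t := {B}))
    (fun x hx => (mem_line_iff hM2f x).mp hx.1.2) hvan
    (by rw [hcard]; have := hp.1; omega)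
  have hBq := hvan2 B ((mem_line_iff hM2f B).mp hBM2)
  have h0 : eval B p = 0 := by rw [hpq, map_mul, hBq, mul_zero]
  rw [hp.2.1] at h0
  exact one_ne_zero h0


lemma no_triple {n : ℕ} {Xs M M' M'' : Set Pt} (hX : IsPoised n Xs) (hn : 1 ≤ n)
    (hM : IsMaxLine n Xs M) (hM' : IsMaxLine n Xs M') (hM'' : IsMaxLine n Xs M'')
    (hne1 : M ≠ M') (hne2 : M ≠ M'') (hne3 : M' ≠ M'')
    {A : Pt} (hAX : A ∈ Xs) (hAM : A ∈ M) (hAM' : A ∈ M') (hAM'' : A ∈ M'') : False := by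
  classical
  have hfin := poised_finite hX
  obtain ⟨f, hf, hMf⟩ := hM.1
  obtain ⟨f', hf', hMf'⟩ := hM'.1
  obtain ⟨f'', hf'', hMf''⟩ := hM''.1
  have hcard : ((Xs ∩ M) \ {A}).ncard = n := by
    rw [Set.ncard_diff_singleton_of_mem (Set.mem_inter hAX hAM), hM.2]
    omega
  have hBex : ((Xs ∩ M) \ {A}).Nonempty := Set.nonempty_of_ncard_ne_zero (by omega)
  obtain ⟨B, hB⟩ := hBex
  obtain ⟨⟨hBX, hBM⟩, hBA'⟩ := hB
  have hBA : B ≠ A := by simpa using hBA'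
  have hBM' : B ∉ M' := fun h => hBA (inter_unique hM.1 hM'.1 hne1 hBM h hAM hAM')
  have hBM'' : B ∉ M'' := fun h => hBA (inter_unique hM.1 hM''.1 hne2 hBM h hAM hAM'')
  obtain ⟨p, hp⟩ := exists_fund hX hBX
  obtain ⟨q₁, hpq₁, hq₁ne, hq₁deg⟩ :=
    peel hf' (fund_ne_zero hp) (maxline_dvd hfin hM' hBM' hp hf' hMf')
  have hvan₁ : ∀ x ∈ (Xs ∩ M'') \ {A}, eval x q₁ = 0 := by
    intro x hx
    obtain ⟨⟨hxX, hxM''⟩, hxA'⟩ := hx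
    have hxA : x ≠ A := by simpa using hxA'
    have hxB : x ≠ B := fun h => hBM'' (h ▸ hxM'')
    have hx0 : eval x p = 0 := hp.2.2 x hxX hxB
    have hxf' : eval x f' ≠ 0 := fun h0 =>
      hxA (inter_unique hM'.1 hM''.1 hne3 ((mem_line_iff hMf' x).mpr h0) hxM'' hAM' hAM'')
    rw [hpq₁, map_mul] at hx0
    rcases mul_eq_zero.mp hx0 with h | h
    · exact absurd h hxf'
    · exact h
  have hcard₁ : ((Xs ∩ M'') \ {A}).ncard = n := by
    rw [Set.ncard_diff_singleton_of_mem (Set.mem_inter hAX hAM''), hM''.2]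
    omega
  have hdvd₂ : f'' ∣ q₁ := by
    refine dvd_of_roots hf'' ((hfin.inter_of_left M'').diff (t := {A}))
      (fun x hx => (mem_line_iff hMf'' x).mp hx.1.2) hvan₁ ?_
    rw [hcard₁]
    have := hp.1
    omega
  obtain ⟨q₂, hpq₂, hq₂ne, hq₂deg⟩ := peel hf'' hq₁ne hdvd₂
  have hvan₂ : ∀ x ∈ (Xs ∩ M) \ {A, B}, eval x q₂ = 0 := by
    intro x hx
    obtain ⟨⟨hxX, hxM⟩, hxAB⟩ := hx
    have hxA : x ≠ A := fun h => hxAB (by simp [h])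
    have hxB : x ≠ B := fun h => hxAB (by simp [h])
    have hx0 : eval x p = 0 := hp.2.2 x hxX hxB
    have hxf' : eval x f' ≠ 0 := fun h0 =>
      hxA (inter_unique hM.1 hM'.1 hne1 hxM ((mem_line_iff hMf' x).mpr h0) hAM hAM')
    have hxf'' : eval x f'' ≠ 0 := fun h0 =>
      hxA (inter_unique hM.1 hM''.1 hne2 hxM ((mem_line_iff hMf'' x).mpr h0) hAM hAM'')
    rw [hpq₁, hpq₂, map_mul, map_mul] at hx0
    rcases mul_eq_zero.mp hx0 with h | h
    · exact absurd h hxf'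
    · rcases mul_eq_zero.mp h with h2 | h2
      · exact absurd h2 hxf''
      · exact h2
  have hcard₂ : ((Xs ∩ M) \ {A, B}).ncard = n - 1 := by
    have hsub : ({A, B} : Set Pt) ⊆ Xs ∩ M := by
      intro z hz
      rcases hz with rfl | rfl
      · exact Set.mem_inter hAX hAM
      · exact Set.mem_inter hBX hBM
    rw [Set.ncard_diff hsub (Set.toFinite _), hM.2, Set.ncard_pair (Ne.symm hBA)]
    omega
  have hvan3 := vanish_on_line hf ((hfin.inter_of_left M).diff (t := {A, B}))
    (fun x hx => (mem_line_iff hMf x).mp hx.1.2) hvan₂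
    (by rw [hcard₂]; have := hp.1; omega)
  have hBq := hvan3 B ((mem_line_iff hMf B).mp hBM)
  have h0 : eval B p = 0 := by rw [hpq₁, hpq₂, map_mul, map_mul, hBq, mul_zero, mul_zero]
  rw [hp.2.1] at h0
  exact one_ne_zero h0

lemma not_uses_on_line {n : ℕ} {Xs ℓ : Set Pt} {Cp : Pt} (hCl : Cp ∈ ℓ) :
    ¬ Uses n Xs ℓ Cp := by
  rintro ⟨p, g, hp, hg, hℓg, w, rfl⟩
  have h0 : eval Cp g = 0 := (mem_line_iff hℓg Cp).mp hCl
  have := hp.2.1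
  rw [map_mul, h0, zero_mul] at this
  exact zero_ne_one this

lemma not_uses {n : ℕ} {Xs ℓ M' M'' : Set Pt} (hX : IsPoised n Xs)
    (hℓ : IsNodeLine n Xs ℓ) (hM' : IsMaxLine n Xs M') (hM'' : IsMaxLine n Xs M'')
    (hneℓ' : ℓ ≠ M') (hneℓ'' : ℓ ≠ M'') (hne : M' ≠ M'')
    {A : Pt} (hAX : A ∈ Xs) (hAl : A ∈ ℓ) (hAM' : A ∈ M') (hAM'' : A ∈ M'')
    {Cp : Pt} (hCX : Cp ∈ Xs) (hCM' : Cp ∈ M') (hCl : Cp ∉ ℓ) : ¬ Uses n Xs ℓ Cp := by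
  rintro ⟨p, g, hp, hg, hℓg, hgdvd⟩
  have hfin := poised_finite hX
  obtain ⟨f', hf', hMf'⟩ := hM'.1
  obtain ⟨f'', hf'', hMf''⟩ := hM''.1
  have hCA : Cp ≠ A := fun h => hCl (h ▸ hAl)
  have hCM'' : Cp ∉ M'' := fun h => hCA (inter_unique hM'.1 hM''.1 hne hCM' h hAM' hAM'')
  obtain ⟨q₁, hpq₁, hq₁ne, hq₁deg⟩ := peel hg (fund_ne_zero hp) hgdvd
  have hvan₁ : ∀ x ∈ (Xs ∩ M'') \ {A}, eval x q₁ = 0 := by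
    intro x hx
    obtain ⟨⟨hxX, hxM''⟩, hxA'⟩ := hx
    have hxA : x ≠ A := by simpa using hxA'
    have hxC : x ≠ Cp := fun h => hCM'' (h ▸ hxM'')
    have hx0 : eval x p = 0 := hp.2.2 x hxX hxC
    have hxg : eval x g ≠ 0 := fun h0 =>
      hxA (inter_unique hℓ.1 hM''.1 hneℓ'' ((mem_line_iff hℓg x).mpr h0) hxM'' hAl hAM'')
    rw [hpq₁, map_mul] at hx0
    rcases mul_eq_zero.mp hx0 with h | h
    · exact absurd h hxg
    · exact h
  have hcard₁ : ((Xs ∩ M'') \ {A}).ncard = n := by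
    rw [Set.ncard_diff_singleton_of_mem (Set.mem_inter hAX hAM''), hM''.2]
    omega
  have hdvd₂ : f'' ∣ q₁ := by
    refine dvd_of_roots hf'' ((hfin.inter_of_left M'').diff (t := {A}))
      (fun x hx => (mem_line_iff hMf'' x).mp hx.1.2) hvan₁ ?_
    rw [hcard₁]
    have := hp.1
    omega
  obtain ⟨q₂, hpq₂, hq₂ne, hq₂deg⟩ := peel hf'' hq₁ne hdvd₂
  have hvan₂ : ∀ x ∈ (Xs ∩ M') \ {A, Cp}, eval x q₂ = 0 := by
    intro x hx
    obtain ⟨⟨hxX, hxM'⟩, hxAC⟩ := hx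
    have hxA : x ≠ A := fun h => hxAC (by simp [h])
    have hxC : x ≠ Cp := fun h => hxAC (by simp [h])
    have hx0 : eval x p = 0 := hp.2.2 x hxX hxC
    have hxg : eval x g ≠ 0 := fun h0 =>
      hxA (inter_unique hM'.1 hℓ.1 (Ne.symm hneℓ') hxM' ((mem_line_iff hℓg x).mpr h0) hAM' hAl)
    have hxf'' : eval x f'' ≠ 0 := fun h0 =>
      hxA (inter_unique hM'.1 hM''.1 hne hxM' ((mem_line_iff hMf'' x).mpr h0) hAM' hAM'')
    rw [hpq₁, hpq₂, map_mul, map_mul] at hx0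
    rcases mul_eq_zero.mp hx0 with h | h
    · exact absurd h hxg
    · rcases mul_eq_zero.mp h with h2 | h2
      · exact absurd h2 hxf''
      · exact h2
  have hcard₂ : ((Xs ∩ M') \ {A, Cp}).ncard = n - 1 := by
    have hsub : ({A, Cp} : Set Pt) ⊆ Xs ∩ M' := by
      intro z hz
      rcases hz with rfl | rfl
      · exact Set.mem_inter hAX hAM'
      · exact Set.mem_inter hCX hCM'
    rw [Set.ncard_diff hsub (Set.toFinite _), hM'.2, Set.ncard_pair (Ne.symm hCA)]
    omega
  have hvan3 := vanish_on_line hf' ((hfin.inter_of_left M').diff (t := {A, Cp}))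
    (fun x hx => (mem_line_iff hMf' x).mp hx.1.2) hvan₂
    (by rw [hcard₂]; have := hp.1; omega)
  have hCq := hvan3 Cp ((mem_line_iff hMf' Cp).mp hCM')
  have h0 : eval Cp p = 0 := by rw [hpq₁, hpq₂, map_mul, map_mul, hCq, mul_zero, mul_zero]
  rw [hp.2.1] at h0
  exact one_ne_zero h0

lemma factor3 {n : ℕ} {Xs ℓ M' M'' : Set Pt} (hX : IsPoised n Xs)
    (hℓ : IsNodeLine n Xs ℓ) (hM' : IsMaxLine n Xs M') (hM'' : IsMaxLine n Xs M'')
    (hneℓ' : ℓ ≠ M') (hneℓ'' : ℓ ≠ M'') (hne : M' ≠ M'')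
    {A : Pt} (hAX : A ∈ Xs) (hAl : A ∈ ℓ) (hAM' : A ∈ M') (hAM'' : A ∈ M'')
    {Cp : Pt} (hCX : Cp ∈ Xs) (hCM' : Cp ∉ M') (hCM'' : Cp ∉ M'') (hCl : Cp ∉ ℓ)
    {p : BPoly} (hp : IsFund n Xs Cp p)
    {g f' f'' : BPoly} (hg : g.totalDegree = 1) (hℓg : ℓ = {x : Pt | eval x g = 0})
    (hf' : f'.totalDegree = 1) (hMf' : M' = {x : Pt | eval x f' = 0})
    (hf'' : f''.totalDegree = 1) (hMf'' : M'' = {x : Pt | eval x f'' = 0}) :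
    ∃ q : BPoly, p = f' * (f'' * (g * q)) ∧ q.totalDegree + 3 = p.totalDegree := by
  have hfin := poised_finite hX
  obtain ⟨q₁, hpq₁, hq₁ne, hq₁deg⟩ :=
    peel hf' (fund_ne_zero hp) (maxline_dvd hfin hM' hCM' hp hf' hMf')
  have hvan₁ : ∀ x ∈ (Xs ∩ M'') \ {A}, eval x q₁ = 0 := by
    intro x hx
    obtain ⟨⟨hxX, hxM''⟩, hxA'⟩ := hx
    have hxA : x ≠ A := by simpa using hxA'
    have hxC : x ≠ Cp := fun h => hCM'' (h ▸ hxM'')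
    have hx0 : eval x p = 0 := hp.2.2 x hxX hxC
    have hxf' : eval x f' ≠ 0 := fun h0 =>
      hxA (inter_unique hM'.1 hM''.1 hne ((mem_line_iff hMf' x).mpr h0) hxM'' hAM' hAM'')
    rw [hpq₁, map_mul] at hx0
    rcases mul_eq_zero.mp hx0 with h | h
    · exact absurd h hxf'
    · exact h
  have hcard₁ : ((Xs ∩ M'') \ {A}).ncard = n := by
    rw [Set.ncard_diff_singleton_of_mem (Set.mem_inter hAX hAM''), hM''.2]
    omega
  have hdvd₂ : f'' ∣ q₁ := by
    refine dvd_of_roots hf'' ((hfin.inter_of_left M'').diff (t := {A}))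
      (fun x hx => (mem_line_iff hMf'' x).mp hx.1.2) hvan₁ ?_
    rw [hcard₁]
    have := hp.1
    omega
  obtain ⟨q₂, hpq₂, hq₂ne, hq₂deg⟩ := peel hf'' hq₁ne hdvd₂
  have hvan₂ : ∀ x ∈ (Xs ∩ ℓ) \ {A}, eval x q₂ = 0 := by
    intro x hx
    obtain ⟨⟨hxX, hxl⟩, hxA'⟩ := hx
    have hxA : x ≠ A := by simpa using hxA'
    have hxC : x ≠ Cp := fun h => hCl (h ▸ hxl)
    have hx0 : eval x p = 0 := hp.2.2 x hxX hxC
    have hxf' : eval x f' ≠ 0 := fun h0 =>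
      hxA (inter_unique hℓ.1 hM'.1 hneℓ' hxl ((mem_line_iff hMf' x).mpr h0) hAl hAM')
    have hxf'' : eval x f'' ≠ 0 := fun h0 =>
      hxA (inter_unique hℓ.1 hM''.1 hneℓ'' hxl ((mem_line_iff hMf'' x).mpr h0) hAl hAM'')
    rw [hpq₁, hpq₂, map_mul, map_mul] at hx0
    rcases mul_eq_zero.mp hx0 with h | h
    · exact absurd h hxf'
    · rcases mul_eq_zero.mp h with h2 | h2
      · exact absurd h2 hxf''
      · exact h2
  have hcard₂ : ((Xs ∩ ℓ) \ {A}).ncard = n - 1 := by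
    rw [Set.ncard_diff_singleton_of_mem (Set.mem_inter hAX hAl), hℓ.2]
  have hdvd₃ : g ∣ q₂ := by
    refine dvd_of_roots hg ((hfin.inter_of_left ℓ).diff (t := {A}))
      (fun x hx => (mem_line_iff hℓg x).mp hx.1.2) hvan₂ ?_
    rw [hcard₂]
    have := hp.1
    omega
  obtain ⟨q₃, hpq₃, hq₃ne, hq₃deg⟩ := peel hg hq₂ne hdvd₃
  refine ⟨q₃, ?_, ?_⟩
  · rw [hpq₁, hpq₂, hpq₃]
  · have := hp.1
    omega

end Aux

/-- Let `X` be an `n`-poised set, `ℓ` an `n`-node line, and `M'`, `M''` two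
maximal lines whose intersection point is a node of `X` on `ℓ`. Then every maximal line `M`
with `M ≠ M'` and `M ≠ M''` satisfies `|M ∩ X_ℓ| = n - 2`. -/
theorem maxLine_inter_useSet_card_of_concurrent (n : ℕ) (X ℓ M' M'' : Set Pt)
    (hX : IsPoised n X) (hℓ : IsNodeLine n X ℓ)
    (hM' : IsMaxLine n X M') (hM'' : IsMaxLine n X M'') (hne : M' ≠ M'')
    (hA : ∃ A : Pt, A ∈ X ∧ A ∈ ℓ ∧ A ∈ M' ∧ A ∈ M'') :
    ∀ M : Set Pt, IsMaxLine n X M → M ≠ M' → M ≠ M'' →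
      (M ∩ UseSet n X ℓ).ncard = n - 2 := by
  classical
  intro M hM hMne' hMne''
  obtain ⟨A, hAX, hAl, hAM', hAM''⟩ := hA
  have hfin := Aux.poised_finite hX
  have hℓM' : ℓ ≠ M' := by
    intro h
    have h1 := hℓ.2
    rw [h, hM'.2] at h1
    omega
  have hℓM'' : ℓ ≠ M'' := by
    intro h
    have h1 := hℓ.2
    rw [h, hM''.2] at h1
    omega
  have hℓM : ℓ ≠ M := by
    intro h
    have h1 := hℓ.2
    rw [h, hM.2] at h1
    omega
  have hn1 : 1 ≤ n := by
    have hpos : 0 < (X ∩ ℓ).ncard :=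
      (Set.ncard_pos (hfin.inter_of_left _)).mpr ⟨A, hAX, hAl⟩
    rw [hℓ.2] at hpos
    omega
  have hAM : A ∉ M := fun h =>
    Aux.no_triple hX hn1 hM hM' hM'' hMne' hMne'' hne hAX h hAM' hAM''
  obtain ⟨B', hB'X, hB'M, hB'M'⟩ := Aux.lines_meet hX hM hM'
  obtain ⟨B'', hB''X, hB''M, hB''M''⟩ := Aux.lines_meet hX hM hM''
  have hB'A : B' ≠ A := fun h => hAM (h ▸ hB'M)
  have hB''A : B'' ≠ A := fun h => hAM (h ▸ hB''M)
  have hB'B'' : B' ≠ B'' := by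
    intro h
    exact hB'A (Aux.inter_unique hM'.1 hM''.1 hne hB'M' (h ▸ hB''M'') hAM' hAM'')
  have hB'ℓ : B' ∉ ℓ := fun h =>
    hB'A (Aux.inter_unique hM'.1 hℓ.1 (Ne.symm hℓM') hB'M' h hAM' hAl)
  have hB''ℓ : B'' ∉ ℓ := fun h =>
    hB''A (Aux.inter_unique hM''.1 hℓ.1 (Ne.symm hℓM'') hB''M'' h hAM'' hAl)
  by_cases hn2 : 2 ≤ n
  · -- main case : n ≥ 2
    obtain ⟨g, hg, hℓg⟩ := hℓ.1
    obtain ⟨f', hf', hMf'⟩ := hM'.1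
    obtain ⟨f'', hf'', hMf''⟩ := hM''.1
    obtain ⟨f, hf, hMf⟩ := hM.1
    have hC0 : ∃ C0 : Pt, C0 ∈ X ∧ C0 ∈ M ∧ C0 ∈ ℓ := by
      by_contra hno
      push_neg at hno
      have hsub : ({B', B''} : Set Pt) ⊆ X ∩ M := by
        intro z hz
        rcases hz with rfl | rfl
        · exact Set.mem_inter hB'X hB'M
        · exact Set.mem_inter hB''X hB''M
      have hcard : ((X ∩ M) \ {B', B''}).ncard = n - 1 := by
        rw [Set.ncard_diff hsub (Set.toFinite _), hM.2, Set.ncard_pair hB'B'']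
        omega
      obtain ⟨C, hC⟩ : ((X ∩ M) \ {B', B''}).Nonempty :=
        Set.nonempty_of_ncard_ne_zero (by omega)
      obtain ⟨⟨hCX, hCM⟩, hCBB⟩ := hC
      have hCB' : C ≠ B' := fun h => hCBB (by simp [h])
      have hCB'' : C ≠ B'' := fun h => hCBB (by simp [h])
      have hCM' : C ∉ M' := fun h =>
        hCB' (Aux.inter_unique hM.1 hM'.1 hMne' hCM h hB'M hB'M')
      have hCM'' : C ∉ M'' := fun h =>
        hCB'' (Aux.inter_unique hM.1 hM''.1 hMne'' hCM h hB''M hB''M'')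
      have hCl : C ∉ ℓ := hno C hCX hCM
      obtain ⟨p, hp⟩ := Aux.exists_fund hX hCX
      obtain ⟨q, hpq, hqdeg⟩ := Aux.factor3 hX hℓ hM' hM'' hℓM' hℓM'' hne hAX hAl hAM'
        hAM'' hCX hCM' hCM'' hCl hp hg hℓg hf' hMf' hf'' hMf''
      have hvan : ∀ x ∈ (X ∩ M) \ {B', B'', C}, eval x q = 0 := by
        intro x hx
        obtain ⟨⟨hxX, hxM⟩, hxn⟩ := hx
        simp only [Set.mem_insert_iff, Set.mem_singleton_iff, not_or] at hxn
        obtain ⟨hxB', hxB'', hxC⟩ := hxn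
        have hx0 : eval x p = 0 := hp.2.2 x hxX hxC
        have hxf' : eval x f' ≠ 0 := fun h0 =>
          hxB' (Aux.inter_unique hM.1 hM'.1 hMne' hxM ((Aux.mem_line_iff hMf' x).mpr h0)
            hB'M hB'M')
        have hxf'' : eval x f'' ≠ 0 := fun h0 =>
          hxB'' (Aux.inter_unique hM.1 hM''.1 hMne'' hxM ((Aux.mem_line_iff hMf'' x).mpr h0)
            hB''M hB''M'')
        have hxg : eval x g ≠ 0 := fun h0 =>
          hno x hxX hxM ((Aux.mem_line_iff hℓg x).mpr h0)
        rw [hpq, map_mul, map_mul, map_mul] at hx0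
        rcases mul_eq_zero.mp hx0 with h | h
        · exact absurd h hxf'
        · rcases mul_eq_zero.mp h with h2 | h2
          · exact absurd h2 hxf''
          · rcases mul_eq_zero.mp h2 with h3 | h3
            · exact absurd h3 hxg
            · exact h3
      have hsub3 : ({B', B'', C} : Set Pt) ⊆ X ∩ M := by
        intro z hz
        rcases hz with rfl | rfl | rfl
        · exact Set.mem_inter hB'X hB'M
        · exact Set.mem_inter hB''X hB''M
        · exact Set.mem_inter hCX hCM
      have h3 : ({B', B'', C} : Set Pt).ncard = 3 := by
        rw [Set.ncard_insert_of_notMem (by simp [hB'B'', Ne.symm hCB']) (Set.toFinite _),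
          Set.ncard_pair (Ne.symm hCB'')]
      have hcard3 : ((X ∩ M) \ {B', B'', C}).ncard = n - 2 := by
        rw [Set.ncard_diff hsub3 (Set.toFinite _), hM.2, h3]
        omega
      have hvan2 := Aux.vanish_on_line hf ((hfin.inter_of_left M).diff (t := {B', B'', C}))
        (fun x hx => (Aux.mem_line_iff hMf x).mp hx.1.2) hvan
        (by rw [hcard3]; have := hp.1; omega)
      have hCq := hvan2 C ((Aux.mem_line_iff hMf C).mp hCM)
      have h0 : eval C p = 0 := by
        rw [hpq, map_mul, map_mul, map_mul, hCq, mul_zero, mul_zero, mul_zero]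
      rw [hp.2.1] at h0
      exact one_ne_zero h0
    obtain ⟨C0, hC0X, hC0M, hC0l⟩ := hC0
    have hC0B' : C0 ≠ B' := fun h => hB'ℓ (h ▸ hC0l)
    have hC0B'' : C0 ≠ B'' := fun h => hB''ℓ (h ▸ hC0l)
    have hEq : M ∩ UseSet n X ℓ = (X ∩ M) \ {B', B'', C0} := by
      ext z
      constructor
      · rintro ⟨hzM, hzX, hzU⟩
        refine ⟨⟨hzX, hzM⟩, ?_⟩
        simp only [Set.mem_insert_iff, Set.mem_singleton_iff, not_or]
        refine ⟨?_, ?_, ?_⟩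
        · rintro rfl
          exact Aux.not_uses hX hℓ hM' hM'' hℓM' hℓM'' hne hAX hAl hAM' hAM''
            hzX hB'M' hB'ℓ hzU
        · rintro rfl
          exact Aux.not_uses hX hℓ hM'' hM' hℓM'' hℓM' (Ne.symm hne) hAX hAl hAM'' hAM'
            hzX hB''M'' hB''ℓ hzU
        · rintro rfl
          exact Aux.not_uses_on_line hC0l hzU
      · rintro ⟨⟨hzX, hzM⟩, hzn⟩
        simp only [Set.mem_insert_iff, Set.mem_singleton_iff, not_or] at hzn
        obtain ⟨hzB', hzB'', hzC0⟩ := hzn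
        have hzM' : z ∉ M' := fun h =>
          hzB' (Aux.inter_unique hM.1 hM'.1 hMne' hzM h hB'M hB'M')
        have hzM'' : z ∉ M'' := fun h =>
          hzB'' (Aux.inter_unique hM.1 hM''.1 hMne'' hzM h hB''M hB''M'')
        have hzl : z ∉ ℓ := fun h =>
          hzC0 (Aux.inter_unique hM.1 hℓ.1 (Ne.symm hℓM) hzM h hC0M hC0l)
        obtain ⟨p, hp⟩ := Aux.exists_fund hX hzX
        obtain ⟨q, hpq, hqdeg⟩ := Aux.factor3 hX hℓ hM' hM'' hℓM' hℓM'' hne hAX hAl hAM'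
          hAM'' hzX hzM' hzM'' hzl hp hg hℓg hf' hMf' hf'' hMf''
        exact ⟨hzM, hzX, p, g, hp, hg, hℓg, ⟨f' * (f'' * q), by rw [hpq]; ring⟩⟩
    rw [hEq]
    have hsub3 : ({B', B'', C0} : Set Pt) ⊆ X ∩ M := by
      intro z hz
      rcases hz with rfl | rfl | rfl
      · exact Set.mem_inter hB'X hB'M
      · exact Set.mem_inter hB''X hB''M
      · exact Set.mem_inter hC0X hC0M
    have h3 : ({B', B'', C0} : Set Pt).ncard = 3 := by
      rw [Set.ncard_insert_of_notMem (by simp [hB'B'', Ne.symm hC0B']) (Set.toFinite _),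
        Set.ncard_pair (Ne.symm hC0B'')]
    rw [Set.ncard_diff hsub3 (Set.toFinite _), hM.2, h3]
    omega
  · -- case n = 1
    have hn : n = 1 := by omega
    have hXM : ({B', B''} : Set Pt) = X ∩ M := by
      apply Set.eq_of_subset_of_ncard_le
      · intro z hz
        rcases hz with rfl | rfl
        · exact Set.mem_inter hB'X hB'M
        · exact Set.mem_inter hB''X hB''M
      · rw [hM.2, Set.ncard_pair hB'B'']
        omega
      · exact hfin.inter_of_left _
    have hempty : M ∩ UseSet n X ℓ = ∅ := by
      ext z
      simp only [Set.mem_empty_iff_false, iff_false]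
      rintro ⟨hzM, hzX, hzU⟩
      have hzXM : z ∈ ({B', B''} : Set Pt) := by
        rw [hXM]
        exact Set.mem_inter hzX hzM
      rcases hzXM with rfl | rfl
      · exact Aux.not_uses hX hℓ hM' hM'' hℓM' hℓM'' hne hAX hAl hAM' hAM''
          hzX hB'M' hB'ℓ hzU
      · exact Aux.not_uses hX hℓ hM'' hM' hℓM'' hℓM' (Ne.symm hne) hAX hAl hAM'' hAM'
          hzX hB''M'' hB''ℓ hzU
    rw [hempty, Set.ncard_empty]
    omega
end

section
/- Let M be a maximal line of a GC_n set X with n ≥ 1. Then X \ M is a GC_{n-1} set. Moreover, for every node A ∈ X \ M there exists a degree-1 polynomial m whose zero set is M such that p*_{A,X} = m · p*_{A, X\M}, where p*_{A,X\M} is the fundamental polynomial of A in the (n−1)-poised set X \ M. -/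
open MvPolynomial

/-! ### Auxiliary lemmas -/

lemma Finsupp.degree_add' {σ : Type*} (u v : σ →₀ ℕ) :
    (u + v).degree = u.degree + v.degree := by
  simp [Finsupp.degree_eq_weight_one, map_add]

lemma hcomp_ne_zero {p : BPoly} (hp : p ≠ 0) :
    homogeneousComponent p.totalDegree p ≠ 0 := by
  classical
  obtain ⟨d, hd, hdeg⟩ : ∃ d ∈ p.support, p.totalDegree = (d.sum fun _ e => e) :=
    p.support.exists_mem_eq_sup (support_nonempty.mpr hp) _
  intro h0
  have hdd : d.degree = p.totalDegree := by rw [hdeg]; rfl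
  have := coeff_homogeneousComponent (n := p.totalDegree) (φ := p) d
  rw [h0, if_pos hdd] at this
  simp only [coeff_zero] at this
  exact (mem_support_iff.mp hd) this.symm

lemma hcomp_mul_top (p q : BPoly) :
    homogeneousComponent (p.totalDegree + q.totalDegree) (p * q)
      = homogeneousComponent p.totalDegree p * homogeneousComponent q.totalDegree q := by
  classical
  ext d
  rw [coeff_homogeneousComponent]
  by_cases hd : d.degree = p.totalDegree + q.totalDegree
  · rw [if_pos hd, coeff_mul, coeff_mul]
    apply Finset.sum_congr rfl
    rintro ⟨u, v⟩ huv
    rw [Finset.HasAntidiagonal.mem_antidiagonal] at huv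
    have hdeg : u.degree + v.degree = p.totalDegree + q.totalDegree := by
      rw [← hd, ← huv, Finsupp.degree_add']
    have hsum_u : u.degree = ∑ i ∈ u.support, u i := rfl
    have hsum_v : v.degree = ∑ i ∈ v.support, v i := rfl
    rcases lt_trichotomy u.degree p.totalDegree with h | h | h
    · have hv : q.totalDegree < v.degree := by omega
      have h1 : coeff v q = 0 := coeff_eq_zero_of_totalDegree_lt (by rw [← hsum_v]; exact hv)
      have h2 : coeff v (homogeneousComponent q.totalDegree q) = 0 := by
        rw [coeff_homogeneousComponent, if_neg (by omega)]
      simp [h1, h2]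
    · have hv : v.degree = q.totalDegree := by omega
      rw [coeff_homogeneousComponent, coeff_homogeneousComponent, if_pos h, if_pos hv]
    · have h1 : coeff u p = 0 := coeff_eq_zero_of_totalDegree_lt (by rw [← hsum_u]; exact h)
      have h2 : coeff u (homogeneousComponent p.totalDegree p) = 0 := by
        rw [coeff_homogeneousComponent, if_neg (by omega)]
      simp [h1, h2]
  · rw [if_neg hd]
    exact (((homogeneousComponent_isHomogeneous _ p).mul
      (homogeneousComponent_isHomogeneous _ q)).coeff_eq_zero hd).symm

lemma totalDegree_mul_eq' {p q : BPoly} (hp : p ≠ 0) (hq : q ≠ 0) :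
    (p * q).totalDegree = p.totalDegree + q.totalDegree := by
  refine le_antisymm (totalDegree_mul p q) ?_
  by_contra hlt
  push_neg at hlt
  have h0 : homogeneousComponent (p.totalDegree + q.totalDegree) (p * q) = 0 :=
    homogeneousComponent_eq_zero _ _ hlt
  rw [hcomp_mul_top] at h0
  exact mul_ne_zero (hcomp_ne_zero hp) (hcomp_ne_zero hq) h0

lemma rep_of_deg_le_one {f : BPoly} (h : f.totalDegree ≤ 1) :
    f = C (coeff 0 f) + C (coeff (Finsupp.single 0 1) f) * X 0
        + C (coeff (Finsupp.single 1 1) f) * X 1 := by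
  have h01 : (Finsupp.single (0 : Fin 2) 1 : Fin 2 →₀ ℕ) ≠ Finsupp.single 1 1 := by
    intro hh
    have := DFunLike.congr_fun hh 0
    simp [Finsupp.single_apply] at this
  have hs0 : (Finsupp.single (0 : Fin 2) 1 : Fin 2 →₀ ℕ) ≠ 0 := by
    intro hh
    have := DFunLike.congr_fun hh 0
    simp [Finsupp.single_apply] at this
  have hs1 : (Finsupp.single (1 : Fin 2) 1 : Fin 2 →₀ ℕ) ≠ 0 := by
    intro hh
    have := DFunLike.congr_fun hh 1
    simp [Finsupp.single_apply] at this
  apply MvPolynomial.ext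
  intro d
  rw [coeff_add, coeff_add, coeff_C, coeff_C_mul, coeff_C_mul, coeff_X', coeff_X']
  by_cases hd0 : d = 0
  · subst hd0
    rw [if_pos rfl, if_neg hs0, if_neg hs1]; ring
  by_cases hdx : Finsupp.single (0 : Fin 2) 1 = d
  · subst hdx
    rw [if_neg (fun hh => hs0 hh.symm), if_pos rfl, if_neg (fun hh => h01 hh.symm)]; ring
  by_cases hdy : Finsupp.single (1 : Fin 2) 1 = d
  · subst hdy
    rw [if_neg (fun hh => hs1 hh.symm), if_neg h01, if_pos rfl]; ring
  · rw [if_neg (fun hh => hd0 hh.symm), if_neg hdx, if_neg hdy]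
    by_contra hc
    have hmem : d ∈ f.support := mem_support_iff.mpr (by simpa using hc)
    have hle : (d.sum fun _ e => e) ≤ 1 := le_trans (le_totalDegree hmem) h
    have hsum : (d.sum fun _ e => e) = d 0 + d 1 := by
      rw [Finsupp.sum_fintype _ _ (fun _ => rfl)]
      exact Fin.sum_univ_two d
    rw [hsum] at hle
    have hcases : (d 0 = 0 ∧ d 1 = 0) ∨ (d 0 = 1 ∧ d 1 = 0) ∨ (d 0 = 0 ∧ d 1 = 1) := by omega
    rcases hcases with ⟨h0, h1⟩ | ⟨h0, h1⟩ | ⟨h0, h1⟩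
    · exact hd0 (by ext i; fin_cases i <;> simp [h0, h1])
    · exact hdx (by ext i; fin_cases i <;> simp [Finsupp.single_apply, h0, h1])
    · exact hdy (by ext i; fin_cases i <;> simp [Finsupp.single_apply, h0, h1])

lemma eval_deg_le_one {f : BPoly} (h : f.totalDegree ≤ 1) (x : Pt) :
    eval x f = coeff 0 f + coeff (Finsupp.single 0 1) f * x 0
      + coeff (Finsupp.single 1 1) f * x 1 := by
  conv_lhs => rw [rep_of_deg_le_one h]
  simp

lemma deg_one_ab {f : BPoly} (h : f.totalDegree = 1) :
    ¬(coeff (Finsupp.single 0 1) f = 0 ∧ coeff (Finsupp.single 1 1) f = 0) := by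
  rintro ⟨h0, h1⟩
  have hrep := rep_of_deg_le_one h.le
  rw [h0, h1] at hrep
  simp only [map_zero, zero_mul, add_zero] at hrep
  rw [hrep, totalDegree_C] at h
  exact one_ne_zero h.symm

lemma eval_aeval_poly (g : Fin 2 → Polynomial ℝ) (p : BPoly) (t : ℝ) :
    Polynomial.eval t (aeval g p) = eval (fun i => Polynomial.eval t (g i)) p := by
  induction p using MvPolynomial.induction_on with
  | C r => simp
  | add p q hp hq => simp [hp, hq]
  | mul_X p i hp => simp [hp]

lemma natDegree_aeval_le {g : Fin 2 → Polynomial ℝ} (hg : ∀ i, (g i).natDegree ≤ 1)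
    (p : BPoly) : (aeval g p).natDegree ≤ p.totalDegree := by
  classical
  conv_lhs => rw [p.as_sum]
  rw [map_sum]
  apply Polynomial.natDegree_sum_le_of_forall_le
  intro d hd
  rw [aeval_monomial]
  refine (Polynomial.natDegree_mul_le).trans ?_
  have h1 : (algebraMap ℝ (Polynomial ℝ) (coeff d p)).natDegree = 0 := by
    simp [Polynomial.natDegree_C]
  rw [h1, zero_add]
  have h2 : (d.prod fun i k => g i ^ k).natDegree ≤ d.sum fun _ e => e := by
    rw [Finsupp.prod]
    refine (Polynomial.natDegree_prod_le _ _).trans ?_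
    rw [Finsupp.sum]
    apply Finset.sum_le_sum
    intro i _
    exact (Polynomial.natDegree_pow_le).trans (by
      have := hg i; nlinarith [Nat.mul_le_mul_left (d i) (hg i)])
  exact h2.trans (le_totalDegree hd)

lemma vanish_on_line {a b c : ℝ} (hab : ¬(a = 0 ∧ b = 0)) {n : ℕ} {p : BPoly}
    (hp : p.totalDegree ≤ n) (S : Finset Pt) (hcard : n < S.card)
    (hSl : ∀ x ∈ S, a * x 0 + b * x 1 + c = 0)
    (hSp : ∀ x ∈ S, eval x p = 0) :
    ∀ x : Pt, a * x 0 + b * x 1 + c = 0 → eval x p = 0 := by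
  classical
  have hs : a ^ 2 + b ^ 2 ≠ 0 := by
    intro h
    exact hab ⟨by nlinarith [sq_nonneg a, sq_nonneg b], by nlinarith [sq_nonneg a, sq_nonneg b]⟩
  obtain ⟨P, hPS⟩ : ∃ P, P ∈ S := Finset.Nonempty.exists_mem (Finset.card_pos.mp (by omega))
  have hPl : a * P 0 + b * P 1 + c = 0 := hSl P hPS
  set v : Pt := ![b, -a] with hv
  set τ : Pt → ℝ := fun x => (b * (x 0 - P 0) - a * (x 1 - P 1)) / (a ^ 2 + b ^ 2) with hτ
  have hrec : ∀ x : Pt, a * x 0 + b * x 1 + c = 0 → (fun i => P i + v i * τ x) = x := by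
    intro x hx
    have hdiff : a * (x 0 - P 0) + b * (x 1 - P 1) = 0 := by linarith
    funext i
    fin_cases i
    · show P 0 + b * τ x = x 0
      rw [hτ]
      field_simp
      linear_combination (-a) * hdiff
    · show P 1 + (-a) * τ x = x 1
      rw [hτ]
      field_simp
      linear_combination (-b) * hdiff
  set g : Fin 2 → Polynomial ℝ := fun i => Polynomial.C (P i) + Polynomial.C (v i) * Polynomial.X
    with hg
  have hgdeg : ∀ i, (g i).natDegree ≤ 1 := by
    intro i
    refine (Polynomial.natDegree_add_le _ _).trans ?_
    simp only [Polynomial.natDegree_C]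
    refine max_le (Nat.zero_le 1) ((Polynomial.natDegree_C_mul_le _ _).trans ?_)
    simp
  set Q : Polynomial ℝ := aeval g p with hQ
  have hQe : ∀ t : ℝ, Q.eval t = eval (fun i => P i + v i * t) p := by
    intro t
    have harg : (fun i => Polynomial.eval t (g i)) = fun i => P i + v i * t := by
      funext i; simp [hg]
    rw [hQ, eval_aeval_poly, harg]
  have hQzero : Q = 0 := by
    apply Polynomial.eq_zero_of_natDegree_lt_card_of_eval_eq_zero' Q (S.image τ)
    · intro t ht
      obtain ⟨x, hxS, rfl⟩ := Finset.mem_image.mp ht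
      rw [hQe, hrec x (hSl x hxS)]
      exact hSp x hxS
    · have hinj : Set.InjOn τ S := by
        intro x hx y hy hxy
        have h1 := hrec x (hSl x hx)
        have h2 := hrec y (hSl y hy)
        rw [← h1, ← h2, hxy]
      rw [Finset.card_image_of_injOn hinj]
      exact lt_of_le_of_lt ((natDegree_aeval_le hgdeg p).trans hp) hcard
  intro x hx
  rw [← hrec x hx, ← hQe, hQzero]
  simp

lemma finSuccEquiv_C' (r : ℝ) :
    finSuccEquiv ℝ 1 (C r) = Polynomial.C (C r) := by
  simp [finSuccEquiv_apply]

lemma X0_case {a b c : ℝ} (ha : a ≠ 0) {p : BPoly}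
    (hvan : ∀ x : Pt, a * x 0 + b * x 1 + c = 0 → eval x p = 0) :
    (C c + C a * X 0 + C b * X 1) ∣ p := by
  set F := finSuccEquiv ℝ 1 with hF
  set g : MvPolynomial (Fin 1) ℝ := C (-(c / a)) + C (-(b / a)) * X 0 with hg
  have hX1 : (X 1 : BPoly) = X (Fin.succ 0) := rfl
  have hFf : F (C c + C a * X 0 + C b * X 1)
      = Polynomial.C (C a) * (Polynomial.X - Polynomial.C g) := by
    rw [map_add, map_add, map_mul, map_mul, hX1, finSuccEquiv_X_zero, finSuccEquiv_X_succ,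
      hF, finSuccEquiv_C', finSuccEquiv_C', finSuccEquiv_C', hg]
    rw [mul_sub, ← Polynomial.C_mul, ← Polynomial.C_mul]
    have : (C a : MvPolynomial (Fin 1) ℝ) * (C (-(c / a)) + C (-(b / a)) * X 0)
        = C (-c) + C (-b) * X 0 := by
      rw [mul_add, ← mul_assoc, ← C_mul, ← C_mul]
      field_simp
    rw [this]
    push_cast [map_add, map_mul, map_neg]
    ring
  have hroot : Polynomial.IsRoot (F p) g := by
    show Polynomial.eval g (F p) = 0
    have hfun : ∀ s : Fin 1 → ℝ, eval s (Polynomial.eval g (F p)) = eval s 0 := by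
      intro s
      have h1 : eval s (Polynomial.eval g (F p))
          = Polynomial.eval (eval s g) (Polynomial.map (eval s) (F p)) := by
        rw [Polynomial.eval_map]
        exact Polynomial.hom_eval₂ (F p) (RingHom.id _) (eval s) g
      have h2 : Polynomial.eval (eval s g) (Polynomial.map (eval s) (F p))
          = eval (Fin.cons (eval s g) s) p := (eval_eq_eval_mv_eval' s (eval s g) p).symm
      rw [h1, h2, map_zero]
      apply hvan
      have hc0 : (Fin.cons (eval s g) s : Fin 2 → ℝ) 0 = eval s g := rfl
      have hc1 : (Fin.cons (eval s g) s : Fin 2 → ℝ) 1 = s 0 := rfl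
      rw [hc0, hc1, hg]
      simp only [map_add, map_mul, map_neg, eval_C, eval_X]
      field_simp
      ring
    exact MvPolynomial.funext hfun
  have hdvd : (Polynomial.X - Polynomial.C g) ∣ F p := Polynomial.dvd_iff_isRoot.mpr hroot
  have hCa : IsUnit (Polynomial.C (C a) : Polynomial (MvPolynomial (Fin 1) ℝ)) := by
    apply IsUnit.of_mul_eq_one (Polynomial.C (C a⁻¹))
    rw [← Polynomial.C_mul, ← C_mul, mul_inv_cancel₀ ha, C_1, Polynomial.C_1]
  have hdvd2 : F (C c + C a * X 0 + C b * X 1) ∣ F p := by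
    rw [hFf]
    exact (IsUnit.mul_left_dvd hCa).mpr hdvd
  obtain ⟨q, hq⟩ := hdvd2
  refine ⟨F.symm q, ?_⟩
  apply F.injective
  rw [map_mul, AlgEquiv.apply_symm_apply, hq]

lemma lin_dvd {a b c : ℝ} (hab : ¬(a = 0 ∧ b = 0)) {p : BPoly}
    (hvan : ∀ x : Pt, a * x 0 + b * x 1 + c = 0 → eval x p = 0) :
    (C c + C a * X 0 + C b * X 1) ∣ p := by
  by_cases ha : a ≠ 0
  · exact X0_case ha hvan
  push_neg at ha
  have hb : b ≠ 0 := fun hb => hab ⟨ha, hb⟩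
  set σ : Equiv.Perm (Fin 2) := Equiv.swap 0 1 with hσ
  have hswap : ∀ x : Pt, (x ∘ σ) 0 = x 1 ∧ (x ∘ σ) 1 = x 0 := by
    intro x
    constructor <;> simp [hσ]
  have hvan' : ∀ x : Pt, b * x 0 + a * x 1 + c = 0 → eval x (rename σ p) = 0 := by
    intro x hx
    rw [eval_rename]
    apply hvan
    rw [(hswap x).1, (hswap x).2]
    linarith
  have hdvd := X0_case hb hvan'
  obtain ⟨q, hq⟩ := hdvd
  refine ⟨rename σ q, ?_⟩
  have happ := congrArg (rename σ) hq
  rw [map_mul, rename_rename] at happ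
  have hid : (σ : Fin 2 → Fin 2) ∘ σ = id := by
    funext i; simp [hσ]
  rw [hid, rename_id, AlgHom.id_apply] at happ
  rw [happ]
  congr 1
  rw [map_add, map_add, map_mul, map_mul, rename_C, rename_C, rename_C, rename_X, rename_X]
  have h0 : σ 0 = 1 := by simp [hσ]
  have h1 : σ 1 = 0 := by simp [hσ]
  rw [h0, h1]
  ring

lemma line_dvd_of_vanish {f p : BPoly} {n : ℕ} (hf : f.totalDegree = 1) (hp : p.totalDegree ≤ n)
    (S : Finset Pt) (hcard : n < S.card)
    (hSf : ∀ x ∈ S, eval x f = 0) (hSp : ∀ x ∈ S, eval x p = 0) : f ∣ p := by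
  have hab := deg_one_ab hf
  have heval : ∀ x : Pt, eval x f = coeff (Finsupp.single 0 1) f * x 0
      + coeff (Finsupp.single 1 1) f * x 1 + coeff 0 f := by
    intro x; rw [eval_deg_le_one hf.le]; ring
  have hvan := vanish_on_line hab hp S hcard
    (fun x hx => by rw [← heval x]; exact hSf x hx) hSp
  have hdvd := lin_dvd hab hvan
  rw [rep_of_deg_le_one hf.le]
  exact hdvd

lemma nonzero_of_deg_one {m : BPoly} (hm : m.totalDegree = 1) : m ≠ 0 := by
  intro h; rw [h] at hm; simp at hm

lemma factor_vanishing {n : ℕ} {f p : BPoly} (hf : f.totalDegree = 1)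
    (S : Finset Pt) (hcard : n < S.card) (hSf : ∀ x ∈ S, eval x f = 0)
    (hp : p.totalDegree ≤ n) (hSp : ∀ x ∈ S, eval x p = 0) :
    ∃ q : BPoly, p = f * q ∧ q.totalDegree ≤ n - 1 := by
  obtain ⟨q, hq⟩ := line_dvd_of_vanish hf hp S hcard hSf hSp
  refine ⟨q, hq, ?_⟩
  by_cases hq0 : q = 0
  · simp [hq0]
  · have hmul := totalDegree_mul_eq' (nonzero_of_deg_one hf) hq0
    rw [← hq, hf] at hmul
    omega

lemma totalDegree_C_mul' {r : ℝ} (hr : r ≠ 0) (p : BPoly) :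
    (C r * p).totalDegree = p.totalDegree := by
  refine le_antisymm ((totalDegree_mul _ _).trans (by simp)) ?_
  have hrw : p = C r⁻¹ * (C r * p) := by
    rw [← mul_assoc, ← C_mul, inv_mul_cancel₀ hr, C_1, one_mul]
  conv_lhs => rw [hrw]
  exact (totalDegree_mul _ _).trans (by simp)

lemma eq_C_of_deg_zero {p : BPoly} (h : p.totalDegree = 0) : p = C (coeff 0 p) := by
  apply MvPolynomial.ext
  intro d
  by_cases hd : d = 0
  · subst hd; simp
  · rw [coeff_C, if_neg (fun hh => hd hh.symm)]
    by_contra hc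
    have hmem : d ∈ p.support := mem_support_iff.mpr hc
    have hall := (totalDegree_eq_zero_iff (Fin 2) p).mp h d hmem
    exact hd (Finsupp.ext fun i => hall i)

lemma irred_of_deg_one {m : BPoly} (hm : m.totalDegree = 1) : Irreducible m := by
  have hmne : m ≠ 0 := nonzero_of_deg_one hm
  constructor
  · intro hu
    obtain ⟨u, rfl⟩ := hu
    have hinv : (u : BPoly) * (u⁻¹ : BPolyˣ) = 1 := u.mul_inv
    have hune : ((u⁻¹ : BPolyˣ) : BPoly) ≠ 0 := by
      intro h
      rw [h, mul_zero] at hinv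
      exact zero_ne_one hinv
    have := totalDegree_mul_eq' hmne hune
    rw [hinv, totalDegree_one, hm] at this
    omega
  · intro s t hst
    have hs : s ≠ 0 := by rintro rfl; rw [zero_mul] at hst; exact hmne hst
    have ht : t ≠ 0 := by rintro rfl; rw [mul_zero] at hst; exact hmne hst
    have hdeg : s.totalDegree + t.totalDegree = 1 := by
      rw [← totalDegree_mul_eq' hs ht, ← hst, hm]
    have hC_unit : ∀ w : BPoly, w ≠ 0 → w.totalDegree = 0 → IsUnit w := by
      intro w hwne hw0
      set r := coeff 0 w with hrdef
      have hrep := eq_C_of_deg_zero hw0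
      have hcne : r ≠ 0 := by
        intro h; rw [← hrdef, h, map_zero] at hrep; exact hwne hrep
      apply IsUnit.of_mul_eq_one (C r⁻¹)
      rw [hrep, ← C_mul, mul_inv_cancel₀ hcne, C_1]
    rcases Nat.eq_zero_or_pos s.totalDegree with h | h
    · exact Or.inl (hC_unit s hs h)
    · exact Or.inr (hC_unit t ht (by omega))

lemma prime_of_deg_one {m : BPoly} (hm : m.totalDegree = 1) : Prime m :=
  (UniqueFactorizationMonoid.irreducible_iff_prime).mp (irred_of_deg_one hm)

/-- If `M` is a maximal line of a `GC_n` set `X` with `n ≥ 1`, then `X \ M` is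
a `GC_{n-1}` set, and for every `A ∈ X \ M` the fundamental polynomial of `A` in `X` factors
as a degree-1 polynomial with zero set `M` times the fundamental polynomial of `A` in `X \ M`. -/
theorem GC_sdiff_maxLine (n : ℕ) (hn : 1 ≤ n) (X M : Set Pt) (hX : IsGC n X)
    (hM : IsMaxLine n X M) :
    IsGC (n - 1) (X \ M) ∧
    ∀ A ∈ X \ M, ∀ p : BPoly, IsFund n X A p →
      ∃ m q : BPoly, m.totalDegree = 1 ∧ M = {x : Pt | eval x m = 0} ∧
        IsFund (n - 1) (X \ M) A q ∧ p = m * q := by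
  obtain ⟨k, rfl⟩ : ∃ k, n = k + 1 := ⟨n - 1, by omega⟩
  simp only [Nat.add_sub_cancel]
  obtain ⟨⟨hcardX, hexu⟩, hGC⟩ := hX
  obtain ⟨⟨f, hf1, hfM⟩, hcardM⟩ := hM
  have hXfin : X.Finite := by
    by_contra h
    rw [Set.Infinite.ncard h] at hcardX
    have h2 : 2 ≤ (k + 1 + 1) * (k + 1 + 2) := by nlinarith
    omega
  have hXMfin : (X ∩ M).Finite := hXfin.inter_of_left M
  have hmemM : ∀ x, x ∈ M ↔ eval x f = 0 := fun x => by rw [hfM]; exact Iff.rfl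
  set S : Finset Pt := hXMfin.toFinset with hSdef
  have hmemS : ∀ x, x ∈ S ↔ x ∈ X ∧ x ∈ M := fun x => by
    rw [hSdef, Set.Finite.mem_toFinset]; exact Iff.rfl
  have hScard : S.card = k + 2 := by
    rw [hSdef, ← Set.ncard_eq_toFinset_card _ hXMfin, hcardM]
  have hSf : ∀ x ∈ S, eval x f = 0 := fun x hx => (hmemM x).mp ((hmemS x).mp hx).2
  have hfne : ∀ B : Pt, B ∉ M → eval B f ≠ 0 := fun B hB h => hB ((hmemM B).mpr h)
  have hfzero : f ≠ 0 := nonzero_of_deg_one hf1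
  -- cardinality of X \ M
  have hdiffcard : (X \ M).ncard = (k + 1) * (k + 2) / 2 := by
    have h1 : X \ M = X \ (X ∩ M) := by ext x; simp only [Set.mem_diff, Set.mem_inter_iff]; tauto
    rw [h1, Set.ncard_diff Set.inter_subset_left hXMfin, hcardX, hcardM]
    have h2 : (k + 1 + 1) * (k + 1 + 2) = (k + 1) * (k + 2) + (k + 2) * 2 := by ring
    rw [h2, Nat.add_mul_div_right _ _ (by norm_num : (0:ℕ) < 2)]
    omega
  -- uniqueness on X
  have huniq0 : ∀ p : BPoly, p.totalDegree ≤ k + 1 → (∀ B ∈ X, eval B p = 0) → p = 0 := by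
    intro p h1 h2
    obtain ⟨p0, _, hup⟩ := hexu (fun _ => 0)
    have e1 := hup p ⟨h1, fun A hA => h2 A hA⟩
    have e2 := hup 0 ⟨by simp, fun A _ => by simp⟩
    rw [e1, e2]
  -- uniqueness on X \ M
  have huniqk : ∀ q : BPoly, q.totalDegree ≤ k → (∀ B ∈ X \ M, eval B q = 0) → q = 0 := by
    intro q hdeg hzero
    have h1 : (f * q).totalDegree ≤ k + 1 := (totalDegree_mul f q).trans (by rw [hf1]; omega)
    have h2 : ∀ B ∈ X, eval B (f * q) = 0 := by
      intro B hB
      rw [eval_mul]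
      by_cases hBM : B ∈ M
      · rw [(hmemM B).mp hBM, zero_mul]
      · rw [hzero B ⟨hB, hBM⟩, mul_zero]
    rcases mul_eq_zero.mp (huniq0 _ h1 h2) with h | h
    · exact absurd h hfzero
    · exact h
  -- existence on X \ M
  have hexk : ∀ c : Pt → ℝ, ∃ q : BPoly, q.totalDegree ≤ k ∧ ∀ B ∈ X \ M, eval B q = c B := by
    intro c
    obtain ⟨p, ⟨hpd, hpv⟩, _⟩ := hexu (fun B => c B * eval B f)
    have hSp : ∀ x ∈ S, eval x p = 0 := by
      intro x hx
      rw [hpv x ((hmemS x).mp hx).1, hSf x hx, mul_zero]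
    obtain ⟨q, hpq, hqd⟩ := factor_vanishing hf1 S (by omega) hSf hpd hSp
    refine ⟨q, by omega, ?_⟩
    intro B hB
    have h := hpv B hB.1
    rw [hpq, eval_mul] at h
    apply mul_left_cancel₀ (hfne B hB.2)
    rw [h]; ring
  have hpoisek : IsPoised k (X \ M) := by
    refine ⟨hdiffcard, fun c => ?_⟩
    obtain ⟨q, hqd, hqv⟩ := hexk c
    refine ⟨q, ⟨hqd, hqv⟩, ?_⟩
    rintro y ⟨hyd, hyv⟩
    have hsub : y - q = 0 := by
      apply huniqk
      · exact (totalDegree_sub y q).trans (max_le hyd hqd)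
      · intro B hB
        rw [map_sub, hyv B hB, hqv B hB, sub_self]
    exact sub_eq_zero.mp hsub
  -- part 2 core
  have hpart2 : ∀ A ∈ X \ M, ∀ p : BPoly, IsFund (k + 1) X A p →
      ∃ m q : BPoly, m.totalDegree = 1 ∧ M = {x : Pt | eval x m = 0} ∧
        IsFund k (X \ M) A q ∧ p = m * q := by
    intro A hA p hp
    obtain ⟨hpd, hpA, hpz⟩ := hp
    have hSp : ∀ x ∈ S, eval x p = 0 := by
      intro x hx
      obtain ⟨hxX, hxM⟩ := (hmemS x).mp hx
      exact hpz x hxX (fun hEq => hA.2 (hEq ▸ hxM))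
    obtain ⟨q0, hpq, hq0d⟩ := factor_vanishing hf1 S (by omega) hSf hpd hSp
    have hr : eval A f * eval A q0 = 1 := by rw [← eval_mul, ← hpq]; exact hpA
    have hrne : eval A f ≠ 0 := by
      intro h; rw [h, zero_mul] at hr; exact zero_ne_one hr
    set r := eval A f with hrdef
    refine ⟨C r⁻¹ * f, C r * q0, ?_, ?_, ⟨?_, ?_, ?_⟩, ?_⟩
    · rw [totalDegree_C_mul' (inv_ne_zero hrne) f, hf1]
    · rw [hfM]
      ext x
      simp only [Set.mem_setOf_eq, eval_mul, eval_C]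
      constructor
      · intro h; rw [h, mul_zero]
      · intro h
        rcases mul_eq_zero.mp h with h | h
        · exact absurd h (inv_ne_zero hrne)
        · exact h
    · rw [totalDegree_C_mul' hrne q0]; omega
    · rw [eval_mul, eval_C]; exact hr
    · intro B hB hBA
      have h0 : eval B p = 0 := hpz B hB.1 hBA
      rw [hpq, eval_mul] at h0
      rcases mul_eq_zero.mp h0 with h | h
      · exact absurd h (hfne B hB.2)
      · rw [eval_mul, eval_C, h, mul_zero]
    · rw [hpq,
        show (C r⁻¹ * f) * (C r * q0) = (C r⁻¹ * C r) * (f * q0) by ring,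
        ← C_mul, inv_mul_cancel₀ hrne, C_1, one_mul]
  refine ⟨⟨hpoisek, ?_⟩, hpart2⟩
  intro A hA
  obtain ⟨p, hpfund, g, hgdeg, hpprod⟩ := hGC A hA.1
  obtain ⟨m, q, hmdeg, hMm, hqfund, hpmq⟩ := hpart2 A hA p hpfund
  refine ⟨q, hqfund, ?_⟩
  have hmprime : Prime m := prime_of_deg_one hmdeg
  have hmne : m ≠ 0 := nonzero_of_deg_one hmdeg
  have hmdvd : m ∣ ∏ i, g i := by
    rw [← hpprod, hpmq]; exact dvd_mul_right m q
  obtain ⟨i₀, -, hdvd⟩ := hmprime.exists_mem_finset_dvd hmdvd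
  obtain ⟨cc, hcc⟩ := hdvd
  have hgne : g i₀ ≠ 0 := nonzero_of_deg_one (hgdeg i₀)
  have hccne : cc ≠ 0 := by rintro rfl; rw [mul_zero] at hcc; exact hgne hcc
  have hccdeg : cc.totalDegree = 0 := by
    have hmuleq := totalDegree_mul_eq' hmne hccne
    rw [← hcc, hgdeg i₀, hmdeg] at hmuleq
    omega
  set c0 := coeff 0 cc with hc0def
  have hccC : cc = C c0 := eq_C_of_deg_zero hccdeg
  have hc0ne : c0 ≠ 0 := fun h => hccne (by rw [hccC, h, map_zero])
  have hprod : ∏ i, g i = m * (cc * ∏ j : Fin k, g (i₀.succAbove j)) := by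
    rw [Fin.prod_univ_succAbove g i₀, hcc]; ring
  have hqeq : q = cc * ∏ j : Fin k, g (i₀.succAbove j) := by
    apply mul_left_cancel₀ hmne
    rw [← hprod, ← hpmq, hpprod]
  rcases Nat.eq_zero_or_pos k with hk | hk
  · subst hk
    refine ⟨fun i => i.elim0, fun i => i.elim0, ?_⟩
    have hq1 : eval A q = 1 := hqfund.2.1
    rw [hqeq, Fin.prod_univ_zero, mul_one] at hq1
    rw [hccC] at hq1
    rw [eval_C] at hq1
    rw [hqeq, Fin.prod_univ_zero, mul_one, hccC, hq1, map_one]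
    simp
  · obtain ⟨j, rfl⟩ : ∃ j, k = j + 1 := ⟨k - 1, by omega⟩
    refine ⟨Fin.cons (cc * g (i₀.succAbove 0)) (fun i : Fin j => g (i₀.succAbove i.succ)), ?_, ?_⟩
    · intro i
      refine Fin.cases ?_ ?_ i
      · rw [Fin.cons_zero, hccC, totalDegree_C_mul' hc0ne]
        exact hgdeg _
      · intro i'
        rw [Fin.cons_succ]
        exact hgdeg _
    · rw [Fin.prod_univ_succ, Fin.cons_zero]
      simp only [Fin.cons_succ]
      rw [hqeq, Fin.prod_univ_succ]
      ring
end
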